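/- arXiv:1402.0149 — 2 statements merged into one kernel-verified Lean document; each statement's English description precedes it below -/
import Mathlib

section
/- Let (P^{kl}, Φ_{kl}) solve the first HMM cell problem on the cube I_δ(x_α): -∂/∂x_j ( c^{(ε)}_{ijnh} ∂P^{kl}_n/∂x_h + e^{(ε)}_{hij} ∂Φ_{kl}/∂x_h ) = 0 and ∂/∂x_i ( e^{(ε)}_{inh} ∂P^{kl}_n/∂x_h − ϵ^{(ε)}_{ih} ∂Φ_{kl}/∂x_h ) = 0 in I_δ(x_α), with boundary data P^{kl}_n = δ_{nk} x_l and Φ_{kl} = 0 on ∂I_δ(x_α); and let (Q^{l}, Ψ_{l}) solve the second HMM cell problem: the same interior system with boundary data Q^{l}_n = 0 and Ψ_l = x_l on ∂I_δ(x_α). Then the two definitions of the HMM effective piezoelectric coefficient coincide: ⟨ e^{(ε)}_{inh} ∂P^{kl}_n/∂x_h − ϵ^{(ε)}_{ih} ∂Φ_{kl}/∂x_h ⟩_{I_δ} = ⟨ c^{(ε)}_{klnh} ∂Q^{i}_n/∂x_h + e^{(ε)}_{hkl} ∂Ψ_i/∂x_h ⟩_{I_δ}, where ⟨·⟩_{I_δ}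 denotes the average (1/|I_δ|)∫_{I_δ} · dx. -/
open MeasureTheory Filter

noncomputable section

/-- Partial derivative of `f` in the `j`-th coordinate direction. -/
def pd (f : (Fin 3 → ℝ) → ℝ) (j : Fin 3) (x : Fin 3 → ℝ) : ℝ :=
  fderiv ℝ f x (Pi.single j 1)

/-- The cube `I_δ(c) = c + [-δ/2, δ/2]^3`. -/
def cube (c : Fin 3 → ℝ) (δ : ℝ) : Set (Fin 3 → ℝ) :=
  Set.univ.pi fun i => Set.Icc (c i - δ / 2) (c i + δ / 2)

/-- A model for membership in `H¹₀(s)`: differentiable, vanishing on the boundary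
of `s`, with the function and its gradient square integrable on `s`. -/
def H10 (s : Set (Fin 3 → ℝ)) (f : (Fin 3 → ℝ) → ℝ) : Prop :=
  Differentiable ℝ f ∧ (∀ x ∈ frontier s, f x = 0) ∧
    IntegrableOn (fun x => f x ^ 2) s ∧ ∀ j, IntegrableOn (fun x => pd f j x ^ 2) s

/-- Bounded measurable (i.e. `L^∞`) scalar function. -/
def BddMeas (f : (Fin 3 → ℝ) → ℝ) : Prop :=
  Measurable f ∧ ∃ M, ∀ x, |f x| ≤ M

namespace HMMAux

lemma pd_meas (f : (Fin 3 → ℝ) → ℝ) (j : Fin 3) : Measurable (pd f j) :=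
  measurable_fderiv_apply_const ℝ f _

lemma diff_coord (l : Fin 3) : Differentiable ℝ (fun x : Fin 3 → ℝ => x l) :=
  fun x => (hasFDerivAt_apply (𝕜 := ℝ) l x).differentiableAt

lemma pd_coord (l j : Fin 3) (x : Fin 3 → ℝ) :
    pd (fun y : Fin 3 → ℝ => y l) j x = if l = j then 1 else 0 := by
  rw [pd, (hasFDerivAt_apply (𝕜 := ℝ) l x).fderiv]
  simp [ContinuousLinearMap.proj_apply, Pi.single_apply]

lemma pd_sub (f g : (Fin 3 → ℝ) → ℝ) (hf : Differentiable ℝ f) (hg : Differentiable ℝ g)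
    (j : Fin 3) (x : Fin 3 → ℝ) :
    pd (fun y => f y - g y) j x = pd f j x - pd g j x := by
  simp [pd, fderiv_fun_sub (hf x) (hg x)]

lemma cube_meas (c : Fin 3 → ℝ) (δ : ℝ) : MeasurableSet (cube c δ) := by
  rw [cube, Set.pi_univ_Icc]; exact measurableSet_Icc

lemma cube_vol (c : Fin 3 → ℝ) (δ : ℝ) : volume (cube c δ) < ⊤ := by
  rw [cube, Set.pi_univ_Icc]
  exact isCompact_Icc.measure_lt_top

variable {s : Set (Fin 3 → ℝ)}

/-- product of two L² functions is L¹. -/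
lemma int_mul {f g : (Fin 3 → ℝ) → ℝ}
    (hf : Measurable f) (hg : Measurable g)
    (hf2 : IntegrableOn (fun x => f x ^ 2) s) (hg2 : IntegrableOn (fun x => g x ^ 2) s) :
    IntegrableOn (fun x => f x * g x) s := by
  have hb : Integrable (fun x => (f x ^ 2 + g x ^ 2) / 2) (volume.restrict s) :=
    (hf2.add hg2).div_const 2
  refine hb.mono' ((hf.mul hg).aestronglyMeasurable) ?_
  filter_upwards with x
  have h1 := sq_nonneg (|f x| - |g x|)
  have h2 : |f x| ^ 2 = f x ^ 2 := sq_abs _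
  have h3 : |g x| ^ 2 = g x ^ 2 := sq_abs _
  rw [Real.norm_eq_abs, abs_mul]
  nlinarith

/-- an L² function on a finite measure set is L¹. -/
lemma int_of_sq (hs : volume s < ⊤) {f : (Fin 3 → ℝ) → ℝ}
    (hf : Measurable f) (hf2 : IntegrableOn (fun x => f x ^ 2) s) :
    IntegrableOn f s := by
  have h1 : IntegrableOn (fun _ : Fin 3 → ℝ => (1:ℝ)) s := by
    exact integrableOn_const hs.ne
  have h2 : IntegrableOn (fun _ : Fin 3 → ℝ => (1:ℝ) ^ 2) s := by
    simp only [one_pow]; exact h1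
  have := int_mul hf measurable_const hf2 h2
  simpa using this

lemma sq_int_add_const (hs : volume s < ⊤) {f : (Fin 3 → ℝ) → ℝ} (C : ℝ)
    (hf : Measurable f) (hf2 : IntegrableOn (fun x => f x ^ 2) s) :
    IntegrableOn (fun x => (f x + C) ^ 2) s := by
  have h1 : IntegrableOn (fun _ : Fin 3 → ℝ => C ^ 2) s := by
    exact integrableOn_const hs.ne
  have hf1 : IntegrableOn f s := int_of_sq hs hf hf2
  have : IntegrableOn (fun x => f x ^ 2 + 2 * C * f x + C ^ 2) s :=
    (hf2.add ((hf1.const_mul (2 * C)))).add h1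
  refine this.congr ?_
  filter_upwards with x
  ring


lemma pointwise_key
    (cc : Fin 3 → Fin 3 → Fin 3 → Fin 3 → ℝ) (ee : Fin 3 → Fin 3 → Fin 3 → ℝ)
    (tt : Fin 3 → Fin 3 → ℝ)
    (hcs : ∀ a b p q, cc a b p q = cc p q a b) (hts : ∀ a b, tt a b = tt b a)
    (dP dQ : Fin 3 → Fin 3 → ℝ) (dF dS : Fin 3 → ℝ) :
    (∑ i', ((∑ n, ∑ h, ee i' n h * dP n h) - ∑ h, tt i' h * dF h) * dS i')
      = (∑ i', ∑ j, ((∑ n, ∑ h, cc i' j n h * dQ n h) + ∑ h, ee h i' j * dS h) * dP i' j)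
        - (∑ i', ∑ j, ((∑ n, ∑ h, cc i' j n h * dP n h) + ∑ h, ee h i' j * dF h) * dQ i' j)
        + (∑ i', ((∑ n, ∑ h, ee i' n h * dQ n h) - ∑ h, tt i' h * dS h) * dF i') := by
  simp only [Fin.sum_univ_three]
  rw [hcs 0 1 0 0, hcs 0 2 0 0, hcs 0 2 0 1, hcs 1 0 0 0, hcs 1 0 0 1, hcs 1 0 0 2, hcs 1 1 0 0, hcs 1 1 0 1, hcs 1 1 0 2, hcs 1 1 1 0, hcs 1 2 0 0, hcs 1 2 0 1, hcs 1 2 0 2, hcs 1 2 1 0, hcs 1 2 1 1, hcs 2 0 0 0, hcs 2 0 0 1, hcs 2 0 0 2, hcs 2 0 1 0, hcs 2 0 1 1, hcs 2 0 1 2, hcs 2 1 0 0, hcs 2 1 0 1, hcs 2 1 0 2, hcs 2 1 1 0, hcs 2 1 1 1, hcs 2 1 1 2, hcs 2 1 2 0, hcs 2 2 0 0, hcs 2 2 0 1, hcs 2 2 0 2, hcs 2 2 1 0, hcs 2 2 1 1, hcs 2 2 1 2, hcs 2 2 2 0, hcs 2 2 2 1, hts 1 0, hts 2 0, hts 2 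1]
  ring


lemma int_bmul {s : Set (Fin 3 → ℝ)} {b f g : (Fin 3 → ℝ) → ℝ}
    (hb : Measurable b) (hB : ∃ M, ∀ x, |b x| ≤ M)
    (hf : Measurable f) (hf2 : IntegrableOn (fun x => f x ^ 2) s)
    (hg : Measurable g) (hg2 : IntegrableOn (fun x => g x ^ 2) s) :
    IntegrableOn (fun x => b x * f x * g x) s := by
  obtain ⟨M, hM⟩ := hB
  have h1 : IntegrableOn (fun x => f x * g x) s := int_mul hf hg hf2 hg2
  have h2 := h1.bdd_mul hb.aestronglyMeasurable
    (c := M) (ae_of_all _ fun x => by simpa [Real.norm_eq_abs] using hM x)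
  refine h2.congr ?_
  filter_upwards with x
  exact (mul_assoc _ _ _).symm

lemma int_sum2 {s : Set (Fin 3 → ℝ)} {b1 : Fin 3 → Fin 3 → (Fin 3 → ℝ) → ℝ}
    {u : Fin 3 → Fin 3 → (Fin 3 → ℝ) → ℝ} {w : (Fin 3 → ℝ) → ℝ}
    (hb1 : ∀ n h, Measurable (b1 n h)) (hB1 : ∀ n h, ∃ M, ∀ x, |b1 n h x| ≤ M)
    (hu : ∀ n h, Measurable (u n h)) (hu2 : ∀ n h, IntegrableOn (fun x => u n h x ^ 2) s)
    (hw : Measurable w) (hw2 : IntegrableOn (fun x => w x ^ 2) s) :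
    IntegrableOn (fun x => ∑ n, ∑ h, b1 n h x * u n h x * w x) s := by
  apply integrable_finset_sum
  intro n _
  apply integrable_finset_sum
  intro h _
  exact int_bmul (hb1 n h) (hB1 n h) (hu n h) (hu2 n h) hw hw2

lemma int_sum1 {s : Set (Fin 3 → ℝ)} {b2 : Fin 3 → (Fin 3 → ℝ) → ℝ}
    {v : Fin 3 → (Fin 3 → ℝ) → ℝ} {w : (Fin 3 → ℝ) → ℝ}
    (hb2 : ∀ h, Measurable (b2 h)) (hB2 : ∀ h, ∃ M, ∀ x, |b2 h x| ≤ M)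
    (hv : ∀ h, Measurable (v h)) (hv2 : ∀ h, IntegrableOn (fun x => v h x ^ 2) s)
    (hw : Measurable w) (hw2 : IntegrableOn (fun x => w x ^ 2) s) :
    IntegrableOn (fun x => ∑ h, b2 h x * v h x * w x) s := by
  apply integrable_finset_sum
  intro h _
  exact int_bmul (hb2 h) (hB2 h) (hv h) (hv2 h) hw hw2

/-- integrability of `((∑∑ b1·u) + ∑ b2·v) * w` -/
lemma int_pair_add {s : Set (Fin 3 → ℝ)} {b1 : Fin 3 → Fin 3 → (Fin 3 → ℝ) → ℝ}
    {b2 : Fin 3 → (Fin 3 → ℝ) → ℝ}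
    {u : Fin 3 → Fin 3 → (Fin 3 → ℝ) → ℝ} {v : Fin 3 → (Fin 3 → ℝ) → ℝ}
    {w : (Fin 3 → ℝ) → ℝ}
    (hb1 : ∀ n h, Measurable (b1 n h)) (hB1 : ∀ n h, ∃ M, ∀ x, |b1 n h x| ≤ M)
    (hb2 : ∀ h, Measurable (b2 h)) (hB2 : ∀ h, ∃ M, ∀ x, |b2 h x| ≤ M)
    (hu : ∀ n h, Measurable (u n h)) (hu2 : ∀ n h, IntegrableOn (fun x => u n h x ^ 2) s)
    (hv : ∀ h, Measurable (v h)) (hv2 : ∀ h, IntegrableOn (fun x => v h x ^ 2) s)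
    (hw : Measurable w) (hw2 : IntegrableOn (fun x => w x ^ 2) s) :
    IntegrableOn
      (fun x => ((∑ n, ∑ h, b1 n h x * u n h x) + ∑ h, b2 h x * v h x) * w x) s := by
  have h := (int_sum2 hb1 hB1 hu hu2 hw hw2).add (int_sum1 hb2 hB2 hv hv2 hw hw2)
  refine h.congr ?_
  filter_upwards with x
  simp only [Pi.add_apply, add_mul, Finset.sum_mul]

/-- integrability of `((∑∑ b1·u) - ∑ b2·v) * w` -/
lemma int_pair_sub {s : Set (Fin 3 → ℝ)} {b1 : Fin 3 → Fin 3 → (Fin 3 → ℝ) → ℝ}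
    {b2 : Fin 3 → (Fin 3 → ℝ) → ℝ}
    {u : Fin 3 → Fin 3 → (Fin 3 → ℝ) → ℝ} {v : Fin 3 → (Fin 3 → ℝ) → ℝ}
    {w : (Fin 3 → ℝ) → ℝ}
    (hb1 : ∀ n h, Measurable (b1 n h)) (hB1 : ∀ n h, ∃ M, ∀ x, |b1 n h x| ≤ M)
    (hb2 : ∀ h, Measurable (b2 h)) (hB2 : ∀ h, ∃ M, ∀ x, |b2 h x| ≤ M)
    (hu : ∀ n h, Measurable (u n h)) (hu2 : ∀ n h, IntegrableOn (fun x => u n h x ^ 2) s)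
    (hv : ∀ h, Measurable (v h)) (hv2 : ∀ h, IntegrableOn (fun x => v h x ^ 2) s)
    (hw : Measurable w) (hw2 : IntegrableOn (fun x => w x ^ 2) s) :
    IntegrableOn
      (fun x => ((∑ n, ∑ h, b1 n h x * u n h x) - ∑ h, b2 h x * v h x) * w x) s := by
  have h := (int_sum2 hb1 hB1 hu hu2 hw hw2).sub (int_sum1 hb2 hB2 hv hv2 hw hw2)
  refine h.congr ?_
  filter_upwards with x
  simp only [Pi.sub_apply, sub_mul, Finset.sum_mul]

/-- integrability of `(∑∑ b1·u) + ∑ b2·v` (no weight), on a finite measure set. -/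
lemma int_pair_add' {s : Set (Fin 3 → ℝ)} (hs : volume s < ⊤)
    {b1 : Fin 3 → Fin 3 → (Fin 3 → ℝ) → ℝ} {b2 : Fin 3 → (Fin 3 → ℝ) → ℝ}
    {u : Fin 3 → Fin 3 → (Fin 3 → ℝ) → ℝ} {v : Fin 3 → (Fin 3 → ℝ) → ℝ}
    (hb1 : ∀ n h, Measurable (b1 n h)) (hB1 : ∀ n h, ∃ M, ∀ x, |b1 n h x| ≤ M)
    (hb2 : ∀ h, Measurable (b2 h)) (hB2 : ∀ h, ∃ M, ∀ x, |b2 h x| ≤ M)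
    (hu : ∀ n h, Measurable (u n h)) (hu2 : ∀ n h, IntegrableOn (fun x => u n h x ^ 2) s)
    (hv : ∀ h, Measurable (v h)) (hv2 : ∀ h, IntegrableOn (fun x => v h x ^ 2) s) :
    IntegrableOn (fun x => (∑ n, ∑ h, b1 n h x * u n h x) + ∑ h, b2 h x * v h x) s := by
  have hw2 : IntegrableOn (fun _ : Fin 3 → ℝ => (1:ℝ) ^ 2) s := by
    simp only [one_pow]; exact integrableOn_const hs.ne
  have h := int_pair_add (w := fun _ => (1:ℝ)) hb1 hB1 hb2 hB2 hu hu2 hv hv2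
    measurable_const hw2
  refine h.congr ?_
  filter_upwards with x
  simp

/-- integrability of `(∑∑ b1·u) - ∑ b2·v` (no weight), on a finite measure set. -/
lemma int_pair_sub' {s : Set (Fin 3 → ℝ)} (hs : volume s < ⊤)
    {b1 : Fin 3 → Fin 3 → (Fin 3 → ℝ) → ℝ} {b2 : Fin 3 → (Fin 3 → ℝ) → ℝ}
    {u : Fin 3 → Fin 3 → (Fin 3 → ℝ) → ℝ} {v : Fin 3 → (Fin 3 → ℝ) → ℝ}
    (hb1 : ∀ n h, Measurable (b1 n h)) (hB1 : ∀ n h, ∃ M, ∀ x, |b1 n h x| ≤ M)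
    (hb2 : ∀ h, Measurable (b2 h)) (hB2 : ∀ h, ∃ M, ∀ x, |b2 h x| ≤ M)
    (hu : ∀ n h, Measurable (u n h)) (hu2 : ∀ n h, IntegrableOn (fun x => u n h x ^ 2) s)
    (hv : ∀ h, Measurable (v h)) (hv2 : ∀ h, IntegrableOn (fun x => v h x ^ 2) s) :
    IntegrableOn (fun x => (∑ n, ∑ h, b1 n h x * u n h x) - ∑ h, b2 h x * v h x) s := by
  have hw2 : IntegrableOn (fun _ : Fin 3 → ℝ => (1:ℝ) ^ 2) s := by
    simp only [one_pow]; exact integrableOn_const hs.ne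
  have h := int_pair_sub (w := fun _ => (1:ℝ)) hb1 hB1 hb2 hB2 hu hu2 hv hv2
    measurable_const hw2
  refine h.congr ?_
  filter_upwards with x
  simp

lemma pd_shift {f : (Fin 3 → ℝ) → ℝ} (hf : Differentiable ℝ f) (l j : Fin 3) (x : Fin 3 → ℝ) :
    pd f j x = pd (fun y => f y - y l) j x + (if l = j then 1 else 0) := by
  rw [pd_sub f (fun y => y l) hf (diff_coord l) j x, pd_coord]; ring

end HMMAux

/-- the two definitions of the HMM effective piezoelectric
coefficient `e^H_{ikl}` (via the first cell problem `(P^{kl}, Φ_{kl})`, resp.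
the second cell problem `(Q^{i}, Ψ_i)`) coincide. -/
theorem hmm_effective_piezo_coefficient_consistency
    (c : Fin 3 → Fin 3 → Fin 3 → Fin 3 → (Fin 3 → ℝ) → ℝ)
    (e : Fin 3 → Fin 3 → Fin 3 → (Fin 3 → ℝ) → ℝ)
    (ϵ : Fin 3 → Fin 3 → (Fin 3 → ℝ) → ℝ)
    (hc : ∀ i j k l, BddMeas (c i j k l)) (he : ∀ k i j, BddMeas (e k i j))
    (hϵ : ∀ i j, BddMeas (ϵ i j))
    (hcsym : ∀ i j k l x, c i j k l x = c j i k l x ∧ c i j k l x = c k l i j x)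
    (hesym : ∀ k i j x, e k i j x = e k j i x)
    (hϵsym : ∀ i j x, ϵ i j x = ϵ j i x)
    (hcell : ∃ α > (0:ℝ), ∀ x (X : Fin 3 → Fin 3 → ℝ), (∀ i j, X i j = X j i) →
      α * (∑ i, ∑ j, X i j ^ 2) ≤ ∑ i, ∑ j, ∑ k, ∑ l, c i j k l x * X i j * X k l)
    (hϵell : ∃ β > (0:ℝ), ∀ x (v : Fin 3 → ℝ),
      β * (∑ i, v i ^ 2) ≤ ∑ i, ∑ j, ϵ i j x * v i * v j)
    (xα : Fin 3 → ℝ) (δ : ℝ) (hδ : 0 < δ)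
    (i k l : Fin 3)
    -- the first cell problem `(P^{kl}, Φ_{kl})`
    (P : Fin 3 → (Fin 3 → ℝ) → ℝ) (Φ : (Fin 3 → ℝ) → ℝ)
    (hPreg : ∀ n, Differentiable ℝ (P n))
    (hPbc : ∀ n, H10 (cube xα δ) (fun x => P n x - if n = k then x l else 0))
    (hΦbc : H10 (cube xα δ) Φ)
    (hP1 : ∀ i', ∀ g, H10 (cube xα δ) g →
      ∫ x in cube xα δ, (∑ j, ((∑ n, ∑ h, c i' j n h x * pd (P n) h x)
        + ∑ h, e h i' j x * pd Φ h x) * pd g j x) = 0)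
    (hP2 : ∀ g, H10 (cube xα δ) g →
      ∫ x in cube xα δ, (∑ i', ((∑ n, ∑ h, e i' n h x * pd (P n) h x)
        - ∑ h, ϵ i' h x * pd Φ h x) * pd g i' x) = 0)
    -- the second cell problem `(Q^{i}, Ψ_i)`
    (Q : Fin 3 → (Fin 3 → ℝ) → ℝ) (Ψ : (Fin 3 → ℝ) → ℝ)
    (hΨreg : Differentiable ℝ Ψ)
    (hQbc : ∀ n, H10 (cube xα δ) (Q n))
    (hΨbc : H10 (cube xα δ) (fun x => Ψ x - x i))
    (hQ1 : ∀ i', ∀ g, H10 (cube xα δ) g →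
      ∫ x in cube xα δ, (∑ j, ((∑ n, ∑ h, c i' j n h x * pd (Q n) h x)
        + ∑ h, e h i' j x * pd Ψ h x) * pd g j x) = 0)
    (hQ2 : ∀ g, H10 (cube xα δ) g →
      ∫ x in cube xα δ, (∑ i', ((∑ n, ∑ h, e i' n h x * pd (Q n) h x)
        - ∑ h, ϵ i' h x * pd Ψ h x) * pd g i' x) = 0) :
    (⨍ x in cube xα δ, ((∑ n, ∑ h, e i n h x * pd (P n) h x) - ∑ h, ϵ i h x * pd Φ h x))
      = ⨍ x in cube xα δ,
          ((∑ n, ∑ h, c k l n h x * pd (Q n) h x) + ∑ h, e h k l x * pd Ψ h x) := by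
  
  classical
  have hsvol : volume (cube xα δ) < ⊤ := HMMAux.cube_vol xα δ
  have sqΦ : ∀ h, IntegrableOn (fun x => pd Φ h x ^ 2) (cube xα δ) := fun h => hΦbc.2.2.2 h
  have sqQ : ∀ n h, IntegrableOn (fun x => pd (Q n) h x ^ 2) (cube xα δ) :=
    fun n h => (hQbc n).2.2.2 h
  have sqΨ : ∀ h, IntegrableOn (fun x => pd Ψ h x ^ 2) (cube xα δ) := by
    intro h
    have hb := hΨbc.2.2.2 h
    have heq : (fun x => pd Ψ h x ^ 2)
        = fun x => (pd (fun y => Ψ y - y i) h x + (if i = h then 1 else 0)) ^ 2 := by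
      funext x; rw [HMMAux.pd_shift hΨreg i h x]
    rw [heq]
    exact HMMAux.sq_int_add_const hsvol _ (HMMAux.pd_meas _ _) hb
  have sqP : ∀ n h, IntegrableOn (fun x => pd (P n) h x ^ 2) (cube xα δ) := by
    intro n h
    have hb := (hPbc n).2.2.2 h
    by_cases hn : n = k
    · simp only [if_pos hn] at hb
      have heq : (fun x => pd (P n) h x ^ 2)
          = fun x => (pd (fun y => P n y - y l) h x + (if l = h then 1 else 0)) ^ 2 := by
        funext x; rw [HMMAux.pd_shift (hPreg n) l h x]
      rw [heq]
      exact HMMAux.sq_int_add_const hsvol _ (HMMAux.pd_meas _ _) hb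
    · simp only [if_neg hn, sub_zero] at hb
      exact hb
  have hIntFΨ : ∀ i', IntegrableOn (fun x => ((∑ n, ∑ h, e i' n h x * pd (P n) h x) - ∑ h, ϵ i' h x * pd Φ h x) * pd Ψ i' x) (cube xα δ) := by
    intro i'
    exact HMMAux.int_pair_sub (b1 := fun n h => e i' n h) (b2 := fun h => ϵ i' h)
      (u := fun n h => pd (P n) h) (v := fun h => pd Φ h) (w := pd Ψ i')
      (fun n h => (he i' n h).1) (fun n h => (he i' n h).2)
      (fun h => (hϵ i' h).1) (fun h => (hϵ i' h).2)
      (fun n h => HMMAux.pd_meas _ _) sqP (fun h => HMMAux.pd_meas _ _) sqΦ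
      (HMMAux.pd_meas _ _) (sqΨ i')
  have hIntF : ∀ i', IntegrableOn (fun x => ((∑ n, ∑ h, e i' n h x * pd (P n) h x) - ∑ h, ϵ i' h x * pd Φ h x)) (cube xα δ) := by
    intro i'
    exact HMMAux.int_pair_sub' hsvol (b1 := fun n h => e i' n h) (b2 := fun h => ϵ i' h)
      (u := fun n h => pd (P n) h) (v := fun h => pd Φ h)
      (fun n h => (he i' n h).1) (fun n h => (he i' n h).2)
      (fun h => (hϵ i' h).1) (fun h => (hϵ i' h).2)
      (fun n h => HMMAux.pd_meas _ _) sqP (fun h => HMMAux.pd_meas _ _) sqΦ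
  have hIntτP : ∀ i' j, IntegrableOn (fun x => ((∑ n, ∑ h, c i' j n h x * pd (Q n) h x) + ∑ h, e h i' j x * pd Ψ h x) * pd (P i') j x) (cube xα δ) := by
    intro i' j
    exact HMMAux.int_pair_add (b1 := fun n h => c i' j n h) (b2 := fun h => e h i' j)
      (u := fun n h => pd (Q n) h) (v := fun h => pd Ψ h) (w := pd (P i') j)
      (fun n h => (hc i' j n h).1) (fun n h => (hc i' j n h).2)
      (fun h => (he h i' j).1) (fun h => (he h i' j).2)
      (fun n h => HMMAux.pd_meas _ _) sqQ (fun h => HMMAux.pd_meas _ _) sqΨ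
      (HMMAux.pd_meas _ _) (sqP i' j)
  have hIntτ : ∀ i' j, IntegrableOn (fun x => ((∑ n, ∑ h, c i' j n h x * pd (Q n) h x) + ∑ h, e h i' j x * pd Ψ h x)) (cube xα δ) := by
    intro i' j
    exact HMMAux.int_pair_add' hsvol (b1 := fun n h => c i' j n h) (b2 := fun h => e h i' j)
      (u := fun n h => pd (Q n) h) (v := fun h => pd Ψ h)
      (fun n h => (hc i' j n h).1) (fun n h => (hc i' j n h).2)
      (fun h => (he h i' j).1) (fun h => (he h i' j).2)
      (fun n h => HMMAux.pd_meas _ _) sqQ (fun h => HMMAux.pd_meas _ _) sqΨ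
  have hIntσQ : ∀ i' j, IntegrableOn (fun x => ((∑ n, ∑ h, c i' j n h x * pd (P n) h x) + ∑ h, e h i' j x * pd Φ h x) * pd (Q i') j x) (cube xα δ) := by
    intro i' j
    exact HMMAux.int_pair_add (b1 := fun n h => c i' j n h) (b2 := fun h => e h i' j)
      (u := fun n h => pd (P n) h) (v := fun h => pd Φ h) (w := pd (Q i') j)
      (fun n h => (hc i' j n h).1) (fun n h => (hc i' j n h).2)
      (fun h => (he h i' j).1) (fun h => (he h i' j).2)
      (fun n h => HMMAux.pd_meas _ _) sqP (fun h => HMMAux.pd_meas _ _) sqΦ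
      (HMMAux.pd_meas _ _) (sqQ i' j)
  have hIntGΦ : ∀ i', IntegrableOn (fun x => ((∑ n, ∑ h, e i' n h x * pd (Q n) h x) - ∑ h, ϵ i' h x * pd Ψ h x) * pd Φ i' x) (cube xα δ) := by
    intro i'
    exact HMMAux.int_pair_sub (b1 := fun n h => e i' n h) (b2 := fun h => ϵ i' h)
      (u := fun n h => pd (Q n) h) (v := fun h => pd Ψ h) (w := pd Φ i')
      (fun n h => (he i' n h).1) (fun n h => (he i' n h).2)
      (fun h => (hϵ i' h).1) (fun h => (hϵ i' h).2)
      (fun n h => HMMAux.pd_meas _ _) sqQ (fun h => HMMAux.pd_meas _ _) sqΨ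
      (HMMAux.pd_meas _ _) (sqΦ i')
  have hrowτ : ∀ i', IntegrableOn (fun x => ∑ j, ((∑ n, ∑ h, c i' j n h x * pd (Q n) h x) + ∑ h, e h i' j x * pd Ψ h x) * pd (P i') j x) (cube xα δ) :=
    fun i' => integrable_finset_sum _ (fun j _ => hIntτP i' j)
  have hrowσ : ∀ i', IntegrableOn (fun x => ∑ j, ((∑ n, ∑ h, c i' j n h x * pd (P n) h x) + ∑ h, e h i' j x * pd Φ h x) * pd (Q i') j x) (cube xα δ) :=
    fun i' => integrable_finset_sum _ (fun j _ => hIntσQ i' j)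
  have hsumFΨ : IntegrableOn (fun x => ∑ i', ((∑ n, ∑ h, e i' n h x * pd (P n) h x) - ∑ h, ϵ i' h x * pd Φ h x) * pd Ψ i' x) (cube xα δ) :=
    integrable_finset_sum _ (fun i' _ => hIntFΨ i')
  have hsumτP : IntegrableOn (fun x => ∑ i', ∑ j, ((∑ n, ∑ h, c i' j n h x * pd (Q n) h x) + ∑ h, e h i' j x * pd Ψ h x) * pd (P i') j x) (cube xα δ) :=
    integrable_finset_sum _ (fun i' _ => hrowτ i')
  have hsumσQ : IntegrableOn (fun x => ∑ i', ∑ j, ((∑ n, ∑ h, c i' j n h x * pd (P n) h x) + ∑ h, e h i' j x * pd Φ h x) * pd (Q i') j x) (cube xα δ) :=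
    integrable_finset_sum _ (fun i' _ => hrowσ i')
  have hsumGΦ : IntegrableOn (fun x => ∑ i', ((∑ n, ∑ h, e i' n h x * pd (Q n) h x) - ∑ h, ϵ i' h x * pd Ψ h x) * pd Φ i' x) (cube xα δ) :=
    integrable_finset_sum _ (fun i' _ => hIntGΦ i')
  have E1 : (∫ x in cube xα δ, ((∑ i', ((∑ n, ∑ h, e i' n h x * pd (P n) h x) - ∑ h, ϵ i' h x * pd Φ h x) * pd Ψ i' x) - ((∑ n, ∑ h, e i n h x * pd (P n) h x) - ∑ h, ϵ i h x * pd Φ h x))) = 0 := by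
    rw [← hP2 (fun x => Ψ x - x i) hΨbc]
    apply integral_congr_ae
    filter_upwards with x
    have hpd : ∀ i', pd (fun y => Ψ y - y i) i' x = pd Ψ i' x - (if i = i' then 1 else 0) := by
      intro i'
      rw [HMMAux.pd_sub Ψ (fun y => y i) hΨreg (HMMAux.diff_coord i) i' x, HMMAux.pd_coord]
    simp only [hpd, mul_sub, Finset.sum_sub_distrib, mul_ite, mul_one, mul_zero,
      Finset.sum_ite_eq, Finset.mem_univ, if_true]
  have key1 : (∫ x in cube xα δ, ((∑ n, ∑ h, e i n h x * pd (P n) h x) - ∑ h, ϵ i h x * pd Φ h x)) = ∫ x in cube xα δ, ∑ i', ((∑ n, ∑ h, e i' n h x * pd (P n) h x) - ∑ h, ϵ i' h x * pd Φ h x) * pd Ψ i' x := by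
    rw [integral_sub hsumFΨ (hIntF i)] at E1
    linarith
  have E2 : ∀ i', (∫ x in cube xα δ, ∑ j, ((∑ n, ∑ h, c i' j n h x * pd (Q n) h x) + ∑ h, e h i' j x * pd Ψ h x) * pd (P i') j x)
      = if i' = k then (∫ x in cube xα δ, ((∑ n, ∑ h, c k l n h x * pd (Q n) h x) + ∑ h, e h k l x * pd Ψ h x)) else 0 := by
    intro i'
    have h0 := hQ1 i' _ (hPbc i')
    by_cases hik : i' = k
    · subst hik
      simp only [eq_self_iff_true, if_true] at h0 ⊢
      have h1 : (∫ x in cube xα δ,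
          ((∑ j, ((∑ n, ∑ h, c i' j n h x * pd (Q n) h x) + ∑ h, e h i' j x * pd Ψ h x) * pd (P i') j x) - ((∑ n, ∑ h, c i' l n h x * pd (Q n) h x) + ∑ h, e h i' l x * pd Ψ h x))) = 0 := by
        rw [← h0]
        apply integral_congr_ae
        filter_upwards with x
        have hpd : ∀ j, pd (fun y => P i' y - y l) j x
            = pd (P i') j x - (if l = j then 1 else 0) := by
          intro j
          rw [HMMAux.pd_sub (P i') (fun y => y l) (hPreg i') (HMMAux.diff_coord l) j x,
            HMMAux.pd_coord]
        simp only [hpd, mul_sub, Finset.sum_sub_distrib, mul_ite, mul_one, mul_zero,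
          Finset.sum_ite_eq, Finset.mem_univ, if_true]
      rw [integral_sub (hrowτ i') (hIntτ i' l)] at h1
      linarith
    · simp only [if_neg hik] at h0 ⊢
      rw [← h0]
      apply integral_congr_ae
      filter_upwards with x
      simp only [sub_zero]
  have hIB : (∫ x in cube xα δ, ∑ i', ∑ j, ((∑ n, ∑ h, c i' j n h x * pd (Q n) h x) + ∑ h, e h i' j x * pd Ψ h x) * pd (P i') j x) = ∫ x in cube xα δ, ((∑ n, ∑ h, c k l n h x * pd (Q n) h x) + ∑ h, e h k l x * pd Ψ h x) := by
    rw [integral_finset_sum _ (fun i' _ => hrowτ i')]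
    simp only [E2]
    simp [Finset.sum_ite_eq']
  have E3 : (∫ x in cube xα δ, ∑ i', ∑ j, ((∑ n, ∑ h, c i' j n h x * pd (P n) h x) + ∑ h, e h i' j x * pd Φ h x) * pd (Q i') j x) = 0 := by
    rw [integral_finset_sum _ (fun i' _ => hrowσ i')]
    apply Finset.sum_eq_zero
    intro i' _
    exact hP1 i' (Q i') (hQbc i')
  have E4 : (∫ x in cube xα δ, ∑ i', ((∑ n, ∑ h, e i' n h x * pd (Q n) h x) - ∑ h, ϵ i' h x * pd Ψ h x) * pd Φ i' x) = 0 := hQ2 Φ hΦbc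
  have hptw : (fun x => ∑ i', ((∑ n, ∑ h, e i' n h x * pd (P n) h x) - ∑ h, ϵ i' h x * pd Φ h x) * pd Ψ i' x)
      = fun x => ((∑ i', ∑ j, ((∑ n, ∑ h, c i' j n h x * pd (Q n) h x) + ∑ h, e h i' j x * pd Ψ h x) * pd (P i') j x) - (∑ i', ∑ j, ((∑ n, ∑ h, c i' j n h x * pd (P n) h x) + ∑ h, e h i' j x * pd Φ h x) * pd (Q i') j x)) + (∑ i', ((∑ n, ∑ h, e i' n h x * pd (Q n) h x) - ∑ h, ϵ i' h x * pd Ψ h x) * pd Φ i' x) := by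
    funext x
    exact HMMAux.pointwise_key (fun a b p q => c a b p q x) (fun a p q => e a p q x)
      (fun a b => ϵ a b x) (fun a b p q => (hcsym a b p q x).2) (fun a b => hϵsym a b x)
      (fun n h => pd (P n) h x) (fun n h => pd (Q n) h x)
      (fun h => pd Φ h x) (fun h => pd Ψ h x)
  have key2 : (∫ x in cube xα δ, ∑ i', ((∑ n, ∑ h, e i' n h x * pd (P n) h x) - ∑ h, ϵ i' h x * pd Φ h x) * pd Ψ i' x)
      = (∫ x in cube xα δ, ∑ i', ∑ j, ((∑ n, ∑ h, c i' j n h x * pd (Q n) h x) + ∑ h, e h i' j x * pd Ψ h x) * pd (P i') j x) - (∫ x in cube xα δ, ∑ i', ∑ j, ((∑ n, ∑ h, c i' j n h x * pd (P n) h x) + ∑ h, e h i' j x * pd Φ h x) * pd (Q i') j x)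
        + (∫ x in cube xα δ, ∑ i', ((∑ n, ∑ h, e i' n h x * pd (Q n) h x) - ∑ h, ϵ i' h x * pd Ψ h x) * pd Φ i' x) := by
    have hsub : IntegrableOn (fun x => (∑ i', ∑ j, ((∑ n, ∑ h, c i' j n h x * pd (Q n) h x) + ∑ h, e h i' j x * pd Ψ h x) * pd (P i') j x) - ∑ i', ∑ j, ((∑ n, ∑ h, c i' j n h x * pd (P n) h x) + ∑ h, e h i' j x * pd Φ h x) * pd (Q i') j x) (cube xα δ) := hsumτP.sub hsumσQ
    rw [hptw, integral_add hsub hsumGΦ, integral_sub hsumτP hsumσQ]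
  have final : (∫ x in cube xα δ, ((∑ n, ∑ h, e i n h x * pd (P n) h x) - ∑ h, ϵ i h x * pd Φ h x)) = ∫ x in cube xα δ, ((∑ n, ∑ h, c k l n h x * pd (Q n) h x) + ∑ h, e h k l x * pd Ψ h x) := by
    rw [key1, key2, E3, E4, hIB]; ring
  rw [setAverage_eq, setAverage_eq, final]
end
end

section
/- Let (P^{kl}, Φ_{kl}) and (Q^{l}, Ψ_{l}) solve the two HMM cell problems on the cube I_δ(x_α) (as in the HMM model), and define the HMM effective coefficients by c^H_{ijkl} = ⟨ c^{(ε)}_{ijnh} ∂P^{kl}_n/∂x_h + e^{(ε)}_{hij} ∂Φ_{kl}/∂x_h ⟩_{I_δ}, e^H_{ikl} = ⟨ e^{(ε)}_{inh} ∂P^{kl}_n/∂x_h − ϵ^{(ε)}_{ih} ∂Φ_{kl}/∂x_h ⟩_{I_δ}, and ϵ^H_{il} = −⟨ e^{(ε)}_{inh} ∂Q^{l}_n/∂x_h − ϵ^{(ε)}_{ih} ∂Ψ_l/∂x_h ⟩_{I_δ}. Then the effective tensors inherit the symmetries of the microscopic tensors: c^H_{ijkl} = c^H_{jikl} = c^H_{klij},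 e^H_{kij} = e^H_{kji}, and ϵ^H_{ij} = ϵ^H_{ji}. -/
open MeasureTheory Filter

noncomputable section

/-- The HMM effective elastic coefficient
`c^H_{ijkl} = ⟨ c_{ijnh} ∂_h P^{kl}_n + e_{hij} ∂_h Φ_{kl} ⟩_{I_δ}`. -/
def cH (c : Fin 3 → Fin 3 → Fin 3 → Fin 3 → (Fin 3 → ℝ) → ℝ)
    (e : Fin 3 → Fin 3 → Fin 3 → (Fin 3 → ℝ) → ℝ) (s : Set (Fin 3 → ℝ))
    (P : Fin 3 → Fin 3 → Fin 3 → (Fin 3 → ℝ) → ℝ)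
    (Φ : Fin 3 → Fin 3 → (Fin 3 → ℝ) → ℝ) (i j k l : Fin 3) : ℝ :=
  ⨍ x in s, ((∑ n, ∑ h, c i j n h x * pd (P k l n) h x) + ∑ h, e h i j x * pd (Φ k l) h x)

/-- The HMM effective piezoelectric coefficient
`e^H_{ikl} = ⟨ e_{inh} ∂_h P^{kl}_n − ϵ_{ih} ∂_h Φ_{kl} ⟩_{I_δ}`. -/
def eH (e : Fin 3 → Fin 3 → Fin 3 → (Fin 3 → ℝ) → ℝ)
    (ϵ : Fin 3 → Fin 3 → (Fin 3 → ℝ) → ℝ) (s : Set (Fin 3 → ℝ))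
    (P : Fin 3 → Fin 3 → Fin 3 → (Fin 3 → ℝ) → ℝ)
    (Φ : Fin 3 → Fin 3 → (Fin 3 → ℝ) → ℝ) (i k l : Fin 3) : ℝ :=
  ⨍ x in s, ((∑ n, ∑ h, e i n h x * pd (P k l n) h x) - ∑ h, ϵ i h x * pd (Φ k l) h x)

/-- The HMM effective dielectric coefficient
`ϵ^H_{il} = −⟨ e_{inh} ∂_h Q^{l}_n − ϵ_{ih} ∂_h Ψ_l ⟩_{I_δ}`. -/
def epsH (e : Fin 3 → Fin 3 → Fin 3 → (Fin 3 → ℝ) → ℝ)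
    (ϵ : Fin 3 → Fin 3 → (Fin 3 → ℝ) → ℝ) (s : Set (Fin 3 → ℝ))
    (Q : Fin 3 → Fin 3 → (Fin 3 → ℝ) → ℝ)
    (Ψ : Fin 3 → (Fin 3 → ℝ) → ℝ) (i l : Fin 3) : ℝ :=
  -⨍ x in s, ((∑ n, ∑ h, e i n h x * pd (Q l n) h x) - ∑ h, ϵ i h x * pd (Ψ l) h x)


abbrev X3 := Fin 3 → ℝ

lemma measurable_pd (f : X3 → ℝ) (j : Fin 3) : Measurable (fun x => pd f j x) :=
  measurable_fderiv_apply_const ℝ f _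

lemma pd_sub {f g : X3 → ℝ} (hf : Differentiable ℝ f) (hg : Differentiable ℝ g)
    (j : Fin 3) (x : X3) :
    pd (fun y => f y - g y) j x = pd f j x - pd g j x := by
  unfold pd
  rw [fderiv_fun_sub (hf x) (hg x)]
  rfl

lemma differentiable_coord (l : Fin 3) : Differentiable ℝ (fun x : X3 => x l) :=
  (ContinuousLinearMap.proj (R := ℝ) (φ := fun _ : Fin 3 => ℝ) l).differentiable

lemma pd_coord (l j : Fin 3) (x : X3) :
    pd (fun y : X3 => y l) j x = if l = j then 1 else 0 := by
  unfold pd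
  have h : fderiv ℝ (fun y : X3 => y l) x
      = (ContinuousLinearMap.proj (R := ℝ) (φ := fun _ : Fin 3 => ℝ) l) :=
    (ContinuousLinearMap.proj (R := ℝ) (φ := fun _ : Fin 3 => ℝ) l).fderiv
  rw [h]
  simp [ContinuousLinearMap.proj_apply, Pi.single_apply]

lemma differentiable_coord_if (cnd : Prop) [Decidable cnd] (l : Fin 3) :
    Differentiable ℝ (fun x : X3 => if cnd then x l else 0) := by
  by_cases h : cnd
  · simpa [h] using differentiable_coord l
  · simpa [h] using (differentiable_const (0:ℝ))

lemma pd_coord_if (cnd : Prop) [Decidable cnd] (l j : Fin 3) (x : X3) :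
    pd (fun y : X3 => if cnd then y l else 0) j x
      = if cnd then (if l = j then 1 else 0) else 0 := by
  by_cases h : cnd
  · simpa [h] using pd_coord l j x
  · simp only [h, if_false]
    unfold pd
    rw [fderiv_fun_const]
    simp

lemma intOn_const {s : Set X3} (hvol : volume s ≠ ⊤) (r : ℝ) :
    IntegrableOn (fun _ : X3 => r) s := by
  rw [integrableOn_const_iff]
  exact Or.inr (lt_top_iff_ne_top.mpr hvol)

lemma intOn_mul3 {s : Set X3} {a f g : X3 → ℝ} {M : ℝ}
    (ha : Measurable a) (hM : ∀ x, |a x| ≤ M)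
    (hf : Measurable f) (hg : Measurable g)
    (hf2 : IntegrableOn (fun x => f x ^ 2) s) (hg2 : IntegrableOn (fun x => g x ^ 2) s) :
    IntegrableOn (fun x => a x * f x * g x) s := by
  have hM0 : 0 ≤ M := le_trans (abs_nonneg _) (hM 0)
  refine Integrable.mono' ((hf2.const_mul (M/2)).add (hg2.const_mul (M/2)))
      (((ha.mul hf).mul hg).aestronglyMeasurable.restrict)
      (Filter.Eventually.of_forall fun x => ?_)
  rw [Real.norm_eq_abs]
  have e1 : |a x * f x * g x| = |a x| * (|f x| * |g x|) := by
    rw [abs_mul, abs_mul, mul_assoc]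
  rw [e1]
  have e2 : |a x| * (|f x| * |g x|) ≤ M * (|f x| * |g x|) :=
    mul_le_mul_of_nonneg_right (hM x) (by positivity)
  refine e2.trans ?_
  simp only [Pi.add_apply]
  nlinarith [sq_nonneg (|f x| - |g x|), sq_abs (f x), sq_abs (g x),
    abs_nonneg (f x), abs_nonneg (g x)]

lemma sqint_comb {s : Set X3} {f g : X3 → ℝ}
    (hf : Measurable f) (hg : Measurable g)
    (hf2 : IntegrableOn (fun x => f x ^ 2) s) (hg2 : IntegrableOn (fun x => g x ^ 2) s)
    (α β : ℝ) : IntegrableOn (fun x => (α * f x + β * g x) ^ 2) s := by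
  refine Integrable.mono' ((hf2.const_mul (2*α^2)).add (hg2.const_mul (2*β^2)))
      ((((hf.const_mul α).add (hg.const_mul β)).pow_const 2).aestronglyMeasurable.restrict)
      (Filter.Eventually.of_forall fun x => ?_)
  rw [Real.norm_eq_abs, abs_of_nonneg (sq_nonneg _)]
  simp only [Pi.add_apply]
  nlinarith [sq_nonneg (α * f x - β * g x)]

lemma sum_delta1 (f : Fin 3 → ℝ) (j : Fin 3) :
    (∑ q, f q * (if j = q then 1 else 0)) = f j := by
  simp [mul_ite]

lemma sum_deltaKron (R : Fin 3 → Fin 3 → ℝ) (i j : Fin 3) :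
    (∑ p, ∑ q, R p q * (if p = i then (if j = q then 1 else 0) else 0)) = R i j := by
  have inner : ∀ p, (∑ q, R p q * (if p = i then (if j = q then 1 else 0) else 0))
      = if p = i then R p j else 0 := by
    intro p
    by_cases h : p = i
    · rw [if_pos h]
      simp only [if_pos h]
      exact sum_delta1 (R p) j
    · simp [h]
  simp only [inner]
  simp

set_option maxHeartbeats 1000000 in
lemma quadSym (C : Fin 3 → Fin 3 → Fin 3 → Fin 3 → ℝ) (E : Fin 3 → Fin 3 → Fin 3 → ℝ)
    (Eps : Fin 3 → Fin 3 → ℝ)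
    (hC : ∀ p q n h, C p q n h = C n h p q) (hEps : ∀ m h, Eps m h = Eps h m)
    (U V : Fin 3 → Fin 3 → ℝ) (a b : Fin 3 → ℝ) :
    (∑ p, ∑ q, ((∑ n, ∑ h, C p q n h * U n h) + ∑ h, E h p q * a h) * V p q)
      + ∑ m, ((∑ n, ∑ h, E m n h * U n h) - ∑ h, Eps m h * a h) * b m
    = (∑ p, ∑ q, ((∑ n, ∑ h, C p q n h * V n h) + ∑ h, E h p q * b h) * U p q)
      + ∑ m, ((∑ n, ∑ h, E m n h * V n h) - ∑ h, Eps m h * b h) * a m := by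
  have key : ∀ (D : Fin 3 → Fin 3 → Fin 3 → Fin 3 → ℝ) (F : Fin 3 → Fin 3 → ℝ),
      (∑ p, ∑ q, ((∑ n, ∑ h, (D p q n h + D n h p q) * U n h) + ∑ h, E h p q * a h) * V p q)
        + ∑ m, ((∑ n, ∑ h, E m n h * U n h) - ∑ h, (F m h + F h m) * a h) * b m
      = (∑ p, ∑ q, ((∑ n, ∑ h, (D p q n h + D n h p q) * V n h) + ∑ h, E h p q * b h) * U p q)
        + ∑ m, ((∑ n, ∑ h, E m n h * V n h) - ∑ h, (F m h + F h m) * b h) * a m := by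
    intro D F
    simp only [Fin.sum_univ_three]
    ring
  have h1 := key (fun p q n h => C p q n h / 2) (fun m h => Eps m h / 2)
  have rC : ∀ p q n h, C p q n h / 2 + C n h p q / 2 = C p q n h := fun p q n h => by
    have := hC p q n h; linarith
  have rE : ∀ m h, Eps m h / 2 + Eps h m / 2 = Eps m h := fun m h => by
    have := hEps m h; linarith
  simp only [rC, rE] at h1
  exact h1

lemma symPair (A : Fin 3 → Fin 3 → ℝ) (hA : ∀ n h, A n h = A h n) (G : Fin 3 → Fin 3 → ℝ) :
    (∑ n, ∑ h, A n h * G n h) = ∑ n, ∑ h, A n h * ((G n h + G h n) / 2) := by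
  have key : ∀ (D : Fin 3 → Fin 3 → ℝ),
      (∑ n, ∑ h, (D n h + D h n) * G n h)
        = ∑ n, ∑ h, (D n h + D h n) * ((G n h + G h n) / 2) := by
    intro D
    simp only [Fin.sum_univ_three]
    ring
  have h1 := key (fun n h => A n h / 2)
  have rA : ∀ n h, A n h / 2 + A h n / 2 = A n h := fun n h => by
    have := hA n h; linarith
  simp only [rA] at h1
  exact h1


lemma W1 {s : Set X3} (hvol : volume s ≠ ⊤)
    (C : Fin 3 → Fin 3 → Fin 3 → Fin 3 → X3 → ℝ) (E : Fin 3 → Fin 3 → Fin 3 → X3 → ℝ)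
    (hC : ∀ p q n h, BddMeas (C p q n h)) (hE : ∀ a b c, BddMeas (E a b c))
    (U : Fin 3 → Fin 3 → X3 → ℝ) (a : Fin 3 → X3 → ℝ)
    (V : Fin 3 → Fin 3 → X3 → ℝ) (K : Fin 3 → Fin 3 → ℝ)
    (mU : ∀ n h, Measurable (U n h)) (ma : ∀ h, Measurable (a h))
    (mV : ∀ p q, Measurable (V p q))
    (iU : ∀ n h, IntegrableOn (fun x => U n h x ^ 2) s)
    (ia : ∀ h, IntegrableOn (fun x => a h x ^ 2) s)
    (iV : ∀ p q, IntegrableOn (fun x => V p q x ^ 2) s)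
    (H1 : ∀ p, ∫ x in s, ∑ q, ((∑ n, ∑ h, C p q n h x * U n h x)
        + ∑ h, E h p q x * a h x) * (V p q x - K p q) = 0) :
    ∫ x in s, ∑ p, ∑ q, ((∑ n, ∑ h, C p q n h x * U n h x)
        + ∑ h, E h p q x * a h x) * V p q x
      = ∫ x in s, ∑ p, ∑ q, ((∑ n, ∑ h, C p q n h x * U n h x)
        + ∑ h, E h p q x * a h x) * K p q := by
  have iRW : ∀ (W : Fin 3 → Fin 3 → X3 → ℝ), (∀ p q, Measurable (W p q)) →
      (∀ p q, IntegrableOn (fun x => W p q x ^ 2) s) → ∀ p q,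
      IntegrableOn (fun x => ((∑ n, ∑ h, C p q n h x * U n h x)
        + ∑ h, E h p q x * a h x) * W p q x) s := by
    intro W mW iW p q
    have hrw : (fun x => ((∑ n, ∑ h, C p q n h x * U n h x)
          + ∑ h, E h p q x * a h x) * W p q x)
        = fun x => (∑ n, ∑ h, C p q n h x * U n h x * W p q x)
          + ∑ h, E h p q x * a h x * W p q x := by
      funext x
      simp only [add_mul, Finset.sum_mul]
    rw [hrw]
    apply Integrable.add
    · apply integrable_finset_sum
      intro n _
      apply integrable_finset_sum
      intro h _
      obtain ⟨mC, M, hM⟩ := hC p q n h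
      exact intOn_mul3 mC hM (mU n h) (mW p q) (iU n h) (iW p q)
    · apply integrable_finset_sum
      intro h _
      obtain ⟨mE, M, hM⟩ := hE h p q
      exact intOn_mul3 mE hM (ma h) (mW p q) (ia h) (iW p q)
  have iV' := iRW V mV iV
  have iK' := iRW (fun p q _ => K p q) (fun _ _ => measurable_const)
    (fun p q => intOn_const hvol _)
  have step : ∀ p, (∫ x in s, ∑ q, ((∑ n, ∑ h, C p q n h x * U n h x)
        + ∑ h, E h p q x * a h x) * V p q x)
      = ∫ x in s, ∑ q, ((∑ n, ∑ h, C p q n h x * U n h x)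
        + ∑ h, E h p q x * a h x) * K p q := by
    intro p
    have h0 := H1 p
    have hsplit : (fun x => ∑ q, ((∑ n, ∑ h, C p q n h x * U n h x)
          + ∑ h, E h p q x * a h x) * (V p q x - K p q))
        = fun x => (∑ q, ((∑ n, ∑ h, C p q n h x * U n h x)
          + ∑ h, E h p q x * a h x) * V p q x)
          - ∑ q, ((∑ n, ∑ h, C p q n h x * U n h x)
          + ∑ h, E h p q x * a h x) * K p q := by
      funext x
      simp only [mul_sub, Finset.sum_sub_distrib]
    rw [hsplit] at h0
    rw [integral_sub (integrable_finset_sum _ fun q _ => iV' p q)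
      (integrable_finset_sum _ fun q _ => iK' p q)] at h0
    exact sub_eq_zero.mp h0
  rw [integral_finset_sum _ fun p _ => integrable_finset_sum _ fun q _ => iV' p q,
      integral_finset_sum _ fun p _ => integrable_finset_sum _ fun q _ => iK' p q]
  exact Finset.sum_congr rfl fun p _ => step p

lemma W2 {s : Set X3} (hvol : volume s ≠ ⊤)
    (E : Fin 3 → Fin 3 → Fin 3 → X3 → ℝ) (Eps : Fin 3 → Fin 3 → X3 → ℝ)
    (hE : ∀ a b c, BddMeas (E a b c)) (hEps : ∀ a b, BddMeas (Eps a b))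
    (U : Fin 3 → Fin 3 → X3 → ℝ) (a : Fin 3 → X3 → ℝ)
    (b : Fin 3 → X3 → ℝ) (κ : Fin 3 → ℝ)
    (mU : ∀ n h, Measurable (U n h)) (ma : ∀ h, Measurable (a h))
    (mb : ∀ m, Measurable (b m))
    (iU : ∀ n h, IntegrableOn (fun x => U n h x ^ 2) s)
    (ia : ∀ h, IntegrableOn (fun x => a h x ^ 2) s)
    (ib : ∀ m, IntegrableOn (fun x => b m x ^ 2) s)
    (H2 : ∫ x in s, ∑ m, ((∑ n, ∑ h, E m n h x * U n h x)
        - ∑ h, Eps m h x * a h x) * (b m x - κ m) = 0) :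
    ∫ x in s, ∑ m, ((∑ n, ∑ h, E m n h x * U n h x)
        - ∑ h, Eps m h x * a h x) * b m x
      = ∫ x in s, ∑ m, ((∑ n, ∑ h, E m n h x * U n h x)
        - ∑ h, Eps m h x * a h x) * κ m := by
  have iRW : ∀ (W : Fin 3 → X3 → ℝ), (∀ m, Measurable (W m)) →
      (∀ m, IntegrableOn (fun x => W m x ^ 2) s) → ∀ m,
      IntegrableOn (fun x => ((∑ n, ∑ h, E m n h x * U n h x)
        - ∑ h, Eps m h x * a h x) * W m x) s := by
    intro W mW iW m
    have hrw : (fun x => ((∑ n, ∑ h, E m n h x * U n h x)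
          - ∑ h, Eps m h x * a h x) * W m x)
        = fun x => (∑ n, ∑ h, E m n h x * U n h x * W m x)
          - ∑ h, Eps m h x * a h x * W m x := by
      funext x
      simp only [sub_mul, Finset.sum_mul]
    rw [hrw]
    apply Integrable.sub
    · apply integrable_finset_sum
      intro n _
      apply integrable_finset_sum
      intro h _
      obtain ⟨mE, M, hM⟩ := hE m n h
      exact intOn_mul3 mE hM (mU n h) (mW m) (iU n h) (iW m)
    · apply integrable_finset_sum
      intro h _
      obtain ⟨mE, M, hM⟩ := hEps m h
      exact intOn_mul3 mE hM (ma h) (mW m) (ia h) (iW m)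
  have ib' := iRW b mb ib
  have iκ' := iRW (fun m _ => κ m) (fun _ => measurable_const) (fun m => intOn_const hvol _)
  have hsplit : (fun x => ∑ m, ((∑ n, ∑ h, E m n h x * U n h x)
        - ∑ h, Eps m h x * a h x) * (b m x - κ m))
      = fun x => (∑ m, ((∑ n, ∑ h, E m n h x * U n h x)
        - ∑ h, Eps m h x * a h x) * b m x)
        - ∑ m, ((∑ n, ∑ h, E m n h x * U n h x)
        - ∑ h, Eps m h x * a h x) * κ m := by
    funext x
    simp only [mul_sub, Finset.sum_sub_distrib]
  rw [hsplit] at H2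
  rw [integral_sub (integrable_finset_sum _ fun m _ => ib' m)
    (integrable_finset_sum _ fun m _ => iκ' m)] at H2
  exact sub_eq_zero.mp H2

lemma integral_congr_fun {s : Set X3} {f g : X3 → ℝ} (h : ∀ x, f x = g x) :
    ∫ x in s, f x = ∫ x in s, g x := by
  exact congrArg _ (funext h)

lemma intOn_mul2 {s : Set X3} (hvol : volume s ≠ ⊤) {a f : X3 → ℝ} {M : ℝ}
    (ha : Measurable a) (hM : ∀ x, |a x| ≤ M)
    (hf : Measurable f) (hf2 : IntegrableOn (fun x => f x ^ 2) s) :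
    IntegrableOn (fun x => a x * f x) s := by
  have hrw : (fun x => a x * f x) = fun x => a x * f x * (fun _ : X3 => (1:ℝ)) x := by
    funext x; simp
  rw [hrw]
  exact intOn_mul3 ha hM hf measurable_const hf2 (by simpa using hvol.lt_top)

lemma H10_sub {s : Set X3} {f g : X3 → ℝ} (hf : H10 s f) (hg : H10 s g) :
    H10 s (fun x => f x - g x) := by
  obtain ⟨hfd, hfb, hf2, hfg⟩ := hf
  obtain ⟨hgd, hgb, hg2, hgg⟩ := hg
  refine ⟨hfd.sub hgd, fun x hx => by simp only []; rw [hfb x hx, hgb x hx]; ring, ?_, ?_⟩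
  · have hrw : (fun x => (f x - g x) ^ 2) = fun x => ((1:ℝ) * f x + (-1) * g x) ^ 2 := by
      funext x; ring
    rw [hrw]
    exact sqint_comb hfd.continuous.measurable hgd.continuous.measurable hf2 hg2 1 (-1)
  · intro p
    have hrw : (fun x => pd (fun y => f y - g y) p x ^ 2)
        = fun x => ((1:ℝ) * pd f p x + (-1) * pd g p x) ^ 2 := by
      funext x; rw [pd_sub hfd hgd p x]; ring
    rw [hrw]
    exact sqint_comb (measurable_pd f p) (measurable_pd g p) (hfg p) (hgg p) 1 (-1)

lemma intR1 {s : Set X3}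
    {C : Fin 3 → Fin 3 → Fin 3 → Fin 3 → X3 → ℝ} {E : Fin 3 → Fin 3 → Fin 3 → X3 → ℝ}
    (hC : ∀ p q n h, BddMeas (C p q n h)) (hE : ∀ a b c, BddMeas (E a b c))
    {U : Fin 3 → Fin 3 → X3 → ℝ} {a : Fin 3 → X3 → ℝ} {W : X3 → ℝ}
    (mU : ∀ n h, Measurable (U n h)) (ma : ∀ h, Measurable (a h)) (mW : Measurable W)
    (iU : ∀ n h, IntegrableOn (fun x => U n h x ^ 2) s)
    (ia : ∀ h, IntegrableOn (fun x => a h x ^ 2) s)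
    (iW : IntegrableOn (fun x => W x ^ 2) s) (p q : Fin 3) :
    IntegrableOn (fun x => ((∑ n, ∑ h, C p q n h x * U n h x)
      + ∑ h, E h p q x * a h x) * W x) s := by
  have hrw : (fun x => ((∑ n, ∑ h, C p q n h x * U n h x)
        + ∑ h, E h p q x * a h x) * W x)
      = fun x => (∑ n, ∑ h, C p q n h x * U n h x * W x)
        + ∑ h, E h p q x * a h x * W x := by
    funext x; simp only [add_mul, Finset.sum_mul]
  rw [hrw]
  apply Integrable.add
  · apply integrable_finset_sum
    intro n _
    apply integrable_finset_sum
    intro h _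
    obtain ⟨mC, M, hM⟩ := hC p q n h
    exact intOn_mul3 mC hM (mU n h) mW (iU n h) iW
  · apply integrable_finset_sum
    intro h _
    obtain ⟨mE, M, hM⟩ := hE h p q
    exact intOn_mul3 mE hM (ma h) mW (ia h) iW

lemma intR2 {s : Set X3}
    {E : Fin 3 → Fin 3 → Fin 3 → X3 → ℝ} {Eps : Fin 3 → Fin 3 → X3 → ℝ}
    (hE : ∀ a b c, BddMeas (E a b c)) (hEps : ∀ a b, BddMeas (Eps a b))
    {U : Fin 3 → Fin 3 → X3 → ℝ} {a : Fin 3 → X3 → ℝ} {W : X3 → ℝ}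
    (mU : ∀ n h, Measurable (U n h)) (ma : ∀ h, Measurable (a h)) (mW : Measurable W)
    (iU : ∀ n h, IntegrableOn (fun x => U n h x ^ 2) s)
    (ia : ∀ h, IntegrableOn (fun x => a h x ^ 2) s)
    (iW : IntegrableOn (fun x => W x ^ 2) s) (m : Fin 3) :
    IntegrableOn (fun x => ((∑ n, ∑ h, E m n h x * U n h x)
      - ∑ h, Eps m h x * a h x) * W x) s := by
  have hrw : (fun x => ((∑ n, ∑ h, E m n h x * U n h x)
        - ∑ h, Eps m h x * a h x) * W x)
      = fun x => (∑ n, ∑ h, E m n h x * U n h x * W x)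
        - ∑ h, Eps m h x * a h x * W x := by
    funext x; simp only [sub_mul, Finset.sum_mul]
  rw [hrw]
  apply Integrable.sub
  · apply integrable_finset_sum
    intro n _
    apply integrable_finset_sum
    intro h _
    obtain ⟨mE, M, hM⟩ := hE m n h
    exact intOn_mul3 mE hM (mU n h) mW (iU n h) iW
  · apply integrable_finset_sum
    intro h _
    obtain ⟨mE, M, hM⟩ := hEps m h
    exact intOn_mul3 mE hM (ma h) mW (ia h) iW

lemma flatQuad (A : Fin 3 → Fin 3 → Fin 3 → Fin 3 → ℝ) (Y : Fin 3 → Fin 3 → ℝ) :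
    (∑ p, ∑ q, (∑ n, ∑ h, A p q n h * Y n h) * Y p q)
      = ∑ i, ∑ j, ∑ k, ∑ l, A i j k l * Y i j * Y k l := by
  simp only [Fin.sum_univ_three]
  ring

lemma flatQuad2 (A : Fin 3 → Fin 3 → ℝ) (v : Fin 3 → ℝ) :
    (∑ m, (∑ h, A m h * v h) * v m) = ∑ i, ∑ j, A i j * v i * v j := by
  simp only [Fin.sum_univ_three]
  ring

lemma sum2_sq_eq_zero {f : Fin 3 → Fin 3 → ℝ} (h : (∑ n, ∑ m, f n m ^ 2) = 0) :
    ∀ n m, f n m = 0 := by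
  intro n m
  have h1 : ∀ i ∈ Finset.univ, (0:ℝ) ≤ ∑ m, f i m ^ 2 := fun i _ =>
    Finset.sum_nonneg fun _ _ => sq_nonneg _
  have h2 := (Finset.sum_eq_zero_iff_of_nonneg h1).mp h n (Finset.mem_univ n)
  have h3 := (Finset.sum_eq_zero_iff_of_nonneg
    (fun j _ => sq_nonneg (f n j))).mp h2 m (Finset.mem_univ m)
  exact pow_eq_zero_iff two_ne_zero |>.mp h3

lemma sum1_sq_eq_zero {f : Fin 3 → ℝ} (h : (∑ m, f m ^ 2) = 0) : ∀ m, f m = 0 := by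
  intro m
  have h3 := (Finset.sum_eq_zero_iff_of_nonneg
    (fun j _ => sq_nonneg (f j))).mp h m (Finset.mem_univ m)
  exact pow_eq_zero_iff two_ne_zero |>.mp h3

/-- the HMM effective tensors inherit the symmetries of the
microscopic tensors. -/
theorem hmm_effective_coefficients_symmetry
    (c : Fin 3 → Fin 3 → Fin 3 → Fin 3 → (Fin 3 → ℝ) → ℝ)
    (e : Fin 3 → Fin 3 → Fin 3 → (Fin 3 → ℝ) → ℝ)
    (ϵ : Fin 3 → Fin 3 → (Fin 3 → ℝ) → ℝ)
    (hc : ∀ i j k l, BddMeas (c i j k l)) (he : ∀ k i j, BddMeas (e k i j))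
    (hϵ : ∀ i j, BddMeas (ϵ i j))
    (hcsym : ∀ i j k l x, c i j k l x = c j i k l x ∧ c i j k l x = c k l i j x)
    (hesym : ∀ k i j x, e k i j x = e k j i x)
    (hϵsym : ∀ i j x, ϵ i j x = ϵ j i x)
    (hcell : ∃ α > (0:ℝ), ∀ x (X : Fin 3 → Fin 3 → ℝ), (∀ i j, X i j = X j i) →
      α * (∑ i, ∑ j, X i j ^ 2) ≤ ∑ i, ∑ j, ∑ k, ∑ l, c i j k l x * X i j * X k l)
    (hϵell : ∃ β > (0:ℝ), ∀ x (v : Fin 3 → ℝ),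
      β * (∑ i, v i ^ 2) ≤ ∑ i, ∑ j, ϵ i j x * v i * v j)
    (xα : Fin 3 → ℝ) (δ : ℝ) (hδ : 0 < δ)
    -- the first family of cell problems `(P^{kl}, Φ_{kl})`
    (P : Fin 3 → Fin 3 → Fin 3 → (Fin 3 → ℝ) → ℝ) (Φ : Fin 3 → Fin 3 → (Fin 3 → ℝ) → ℝ)
    (hPreg : ∀ k l n, Differentiable ℝ (P k l n))
    (hPbc : ∀ k l n, H10 (cube xα δ) (fun x => P k l n x - if n = k then x l else 0))
    (hΦbc : ∀ k l, H10 (cube xα δ) (Φ k l))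
    (hP1 : ∀ k l i', ∀ g, H10 (cube xα δ) g →
      ∫ x in cube xα δ, (∑ j, ((∑ n, ∑ h, c i' j n h x * pd (P k l n) h x)
        + ∑ h, e h i' j x * pd (Φ k l) h x) * pd g j x) = 0)
    (hP2 : ∀ k l, ∀ g, H10 (cube xα δ) g →
      ∫ x in cube xα δ, (∑ i', ((∑ n, ∑ h, e i' n h x * pd (P k l n) h x)
        - ∑ h, ϵ i' h x * pd (Φ k l) h x) * pd g i' x) = 0)
    -- the second family of cell problems `(Q^{l}, Ψ_l)`
    (Q : Fin 3 → Fin 3 → (Fin 3 → ℝ) → ℝ) (Ψ : Fin 3 → (Fin 3 → ℝ) → ℝ)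
    (hΨreg : ∀ l, Differentiable ℝ (Ψ l))
    (hQbc : ∀ l n, H10 (cube xα δ) (Q l n))
    (hΨbc : ∀ l, H10 (cube xα δ) (fun x => Ψ l x - x l))
    (hQ1 : ∀ l i', ∀ g, H10 (cube xα δ) g →
      ∫ x in cube xα δ, (∑ j, ((∑ n, ∑ h, c i' j n h x * pd (Q l n) h x)
        + ∑ h, e h i' j x * pd (Ψ l) h x) * pd g j x) = 0)
    (hQ2 : ∀ l, ∀ g, H10 (cube xα δ) g →
      ∫ x in cube xα δ, (∑ i', ((∑ n, ∑ h, e i' n h x * pd (Q l n) h x)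
        - ∑ h, ϵ i' h x * pd (Ψ l) h x) * pd g i' x) = 0) :
    (∀ i j k l, cH c e (cube xα δ) P Φ i j k l = cH c e (cube xα δ) P Φ j i k l ∧
        cH c e (cube xα δ) P Φ i j k l = cH c e (cube xα δ) P Φ k l i j) ∧
    (∀ k i j, eH e ϵ (cube xα δ) P Φ k i j = eH e ϵ (cube xα δ) P Φ k j i) ∧
    (∀ i j, epsH e ϵ (cube xα δ) Q Ψ i j = epsH e ϵ (cube xα δ) Q Ψ j i) := by
    classical
  obtain ⟨α, hα, hell⟩ := hcell
  obtain ⟨β, hβ, hϵel⟩ := hϵell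
  set s : Set (Fin 3 → ℝ) := cube xα δ with hsdef
  have hsm : MeasurableSet s := MeasurableSet.univ_pi fun i => measurableSet_Icc
  have hvol : volume s ≠ ⊤ := by
    rw [hsdef]
    unfold cube
    rw [MeasureTheory.volume_pi_pi]
    refine (ENNReal.prod_lt_top fun i _ => ?_).ne
    rw [Real.volume_Icc]
    exact ENNReal.ofReal_lt_top
  -- measurability of gradients
  have mP : ∀ k l n h, Measurable (fun x => pd (P k l n) h x) := fun k l n h =>
    measurable_pd _ _
  have mF : ∀ k l h, Measurable (fun x => pd (Φ k l) h x) := fun k l h =>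
    measurable_pd _ _
  have mQ : ∀ l n h, Measurable (fun x => pd (Q l n) h x) := fun l n h =>
    measurable_pd _ _
  have mS : ∀ l h, Measurable (fun x => pd (Ψ l) h x) := fun l h =>
    measurable_pd _ _
  -- square-integrability of gradients
  have iF : ∀ k l h, IntegrableOn (fun x => pd (Φ k l) h x ^ 2) s := fun k l h =>
    (hΦbc k l).2.2.2 h
  have iQ : ∀ l n h, IntegrableOn (fun x => pd (Q l n) h x ^ 2) s := fun l n h =>
    (hQbc l n).2.2.2 h
  have iP : ∀ k l n h, IntegrableOn (fun x => pd (P k l n) h x ^ 2) s := by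
    intro k l n h
    have h0 := (hPbc k l n).2.2.2 h
    have hpd : ∀ x, pd (fun y => P k l n y - if n = k then y l else 0) h x
        = pd (P k l n) h x - (if n = k then (if l = h then 1 else 0) else 0) := by
      intro x
      rw [pd_sub (hPreg k l n) (differentiable_coord_if _ _) h x, pd_coord_if]
    simp only [hpd] at h0
    have hrw : (fun x => pd (P k l n) h x ^ 2)
        = fun x => ((1:ℝ) * (pd (P k l n) h x
            - (if n = k then (if l = h then 1 else 0) else 0))
          + (if n = k then (if l = h then 1 else 0) else (0:ℝ)) * 1) ^ 2 := by
      funext x; ring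
    rw [hrw]
    exact sqint_comb ((mP k l n h).sub_const _) measurable_const h0
      (by simpa using hvol.lt_top) 1 _
  have iS : ∀ l h, IntegrableOn (fun x => pd (Ψ l) h x ^ 2) s := by
    intro l h
    have h0 := (hΨbc l).2.2.2 h
    have hpd : ∀ x, pd (fun y => Ψ l y - y l) h x
        = pd (Ψ l) h x - (if l = h then 1 else 0) := by
      intro x
      rw [pd_sub (hΨreg l) (differentiable_coord l) h x, pd_coord]
    simp only [hpd] at h0
    have hrw : (fun x => pd (Ψ l) h x ^ 2)
        = fun x => ((1:ℝ) * (pd (Ψ l) h x - (if l = h then 1 else 0))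
          + (if l = h then (1:ℝ) else 0) * 1) ^ 2 := by
      funext x; ring
    rw [hrw]
    exact sqint_comb ((mS l h).sub_const _) measurable_const h0
      (by simpa using hvol.lt_top) 1 _
  -- pointwise symmetry instances of c
  have csym1 : ∀ i j n h x, c i j n h x = c j i n h x := fun i j n h x => (hcsym i j n h x).1
  have csym2 : ∀ i j n h x, c i j n h x = c n h i j x := fun i j n h x => (hcsym i j n h x).2
  have csym3 : ∀ i j n h x, c i j n h x = c i j h n x := by
    intro i j n h x
    rw [csym2 i j n h x, csym1 n h i j x, ← csym2 i j h n x]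
  refine ⟨?_, ?_, ?_⟩
  · -- c^H symmetries
    have KEY1 : ∀ k l i j : Fin 3,
        (∫ x in s, ((∑ n, ∑ h, c i j n h x * pd (P k l n) h x)
          + ∑ h, e h i j x * pd (Φ k l) h x))
        = ∫ x in s, ((∑ p, ∑ q, ((∑ n, ∑ h, c p q n h x * pd (P k l n) h x)
            + ∑ h, e h p q x * pd (Φ k l) h x) * pd (P i j p) q x)
          + ∑ m, ((∑ n, ∑ h, e m n h x * pd (P k l n) h x)
            - ∑ h, ϵ m h x * pd (Φ k l) h x) * pd (Φ i j) m x) := by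
      intro k l i j
      have hH1 : ∀ p, ∫ x in s, ∑ q, ((∑ n, ∑ h, c p q n h x * pd (P k l n) h x)
          + ∑ h, e h p q x * pd (Φ k l) h x) * (pd (P i j p) q x
            - (if p = i then (if j = q then 1 else 0) else 0)) = 0 := by
        intro p
        have h0 := hP1 k l p (fun x => P i j p x - if p = i then x j else 0) (hPbc i j p)
        have hgq : ∀ q x, pd (fun y => P i j p y - if p = i then y j else 0) q x
            = pd (P i j p) q x - (if p = i then (if j = q then 1 else 0) else 0) := by
          intro q x
          rw [pd_sub (hPreg i j p) (differentiable_coord_if _ _) q x, pd_coord_if]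
        simp only [hgq] at h0
        exact h0
      have A1 := W1 hvol c e hc he (fun n h x => pd (P k l n) h x)
        (fun h x => pd (Φ k l) h x) (fun p q x => pd (P i j p) q x)
        (fun p q => if p = i then (if j = q then 1 else 0) else 0)
        (fun n h => mP k l n h) (fun h => mF k l h) (fun p q => mP i j p q)
        (fun n h => iP k l n h) (fun h => iF k l h) (fun p q => iP i j p q) hH1
      have hH2 : ∫ x in s, ∑ m, ((∑ n, ∑ h, e m n h x * pd (P k l n) h x)
          - ∑ h, ϵ m h x * pd (Φ k l) h x) * (pd (Φ i j) m x - 0) = 0 := by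
        have h0 := hP2 k l (Φ i j) (hΦbc i j)
        simp only [sub_zero]
        exact h0
      have A2 := W2 hvol e ϵ he hϵ (fun n h x => pd (P k l n) h x)
        (fun h x => pd (Φ k l) h x) (fun m x => pd (Φ i j) m x) (fun _ => 0)
        (fun n h => mP k l n h) (fun h => mF k l h) (fun m => mF i j m)
        (fun n h => iP k l n h) (fun h => iF k l h) (fun m => iF i j m) hH2
      have A2' : (∫ x in s, ∑ m, ((∑ n, ∑ h, e m n h x * pd (P k l n) h x)
          - ∑ h, ϵ m h x * pd (Φ k l) h x) * pd (Φ i j) m x) = 0 := by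
        rw [A2]
        have hz : ∀ x : Fin 3 → ℝ, (∑ m, ((∑ n, ∑ h, e m n h x * pd (P k l n) h x)
            - ∑ h, ϵ m h x * pd (Φ k l) h x) * (0:ℝ)) = 0 := by
          intro x; simp
        rw [integral_congr_fun hz, integral_zero]
      have iRV : IntegrableOn (fun x => ∑ p, ∑ q,
          ((∑ n, ∑ h, c p q n h x * pd (P k l n) h x)
          + ∑ h, e h p q x * pd (Φ k l) h x) * pd (P i j p) q x) s :=
        integrable_finset_sum _ fun p _ => integrable_finset_sum _ fun q _ =>
          intR1 hc he (mP k l) (mF k l) (mP i j p q) (iP k l) (iF k l) (iP i j p q) p q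
      have iDb : IntegrableOn (fun x => ∑ m, ((∑ n, ∑ h, e m n h x * pd (P k l n) h x)
          - ∑ h, ϵ m h x * pd (Φ k l) h x) * pd (Φ i j) m x) s :=
        integrable_finset_sum _ fun m _ =>
          intR2 he hϵ (mP k l) (mF k l) (mF i j m) (iP k l) (iF k l) (iF i j m) m
      have hKval : ∀ x : Fin 3 → ℝ, (∑ p, ∑ q,
            ((∑ n, ∑ h, c p q n h x * pd (P k l n) h x)
            + ∑ h, e h p q x * pd (Φ k l) h x)
            * (if p = i then (if j = q then 1 else 0) else 0))
          = (∑ n, ∑ h, c i j n h x * pd (P k l n) h x)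
            + ∑ h, e h i j x * pd (Φ k l) h x := fun x =>
        sum_deltaKron (fun p q => (∑ n, ∑ h, c p q n h x * pd (P k l n) h x)
            + ∑ h, e h p q x * pd (Φ k l) h x) i j
      calc (∫ x in s, ((∑ n, ∑ h, c i j n h x * pd (P k l n) h x)
            + ∑ h, e h i j x * pd (Φ k l) h x))
          = ∫ x in s, ∑ p, ∑ q, ((∑ n, ∑ h, c p q n h x * pd (P k l n) h x)
            + ∑ h, e h p q x * pd (Φ k l) h x)
            * (if p = i then (if j = q then 1 else 0) else 0) :=
            (integral_congr_fun hKval).symm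
        _ = ∫ x in s, ∑ p, ∑ q, ((∑ n, ∑ h, c p q n h x * pd (P k l n) h x)
            + ∑ h, e h p q x * pd (Φ k l) h x) * pd (P i j p) q x := A1.symm
        _ = (∫ x in s, ∑ p, ∑ q, ((∑ n, ∑ h, c p q n h x * pd (P k l n) h x)
            + ∑ h, e h p q x * pd (Φ k l) h x) * pd (P i j p) q x)
            + ∫ x in s, ∑ m, ((∑ n, ∑ h, e m n h x * pd (P k l n) h x)
            - ∑ h, ϵ m h x * pd (Φ k l) h x) * pd (Φ i j) m x := by rw [A2']; ring
        _ = _ := (integral_add iRV iDb).symm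
    intro i j k l
    constructor
    · unfold cH
      refine congrArg _ (funext fun x => ?_)
      congr 1
      · exact Finset.sum_congr rfl fun n _ => Finset.sum_congr rfl fun h _ => by
          rw [csym1 i j n h x]
      · exact Finset.sum_congr rfl fun h _ => by rw [hesym h i j x]
    · unfold cH
      rw [setAverage_eq, setAverage_eq]
      congr 1
      calc (∫ x in s, ((∑ n, ∑ h, c i j n h x * pd (P k l n) h x)
            + ∑ h, e h i j x * pd (Φ k l) h x))
          = _ := KEY1 k l i j
        _ = ∫ x in s, ((∑ p, ∑ q, ((∑ n, ∑ h, c p q n h x * pd (P i j n) h x)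
            + ∑ h, e h p q x * pd (Φ i j) h x) * pd (P k l p) q x)
          + ∑ m, ((∑ n, ∑ h, e m n h x * pd (P i j n) h x)
            - ∑ h, ϵ m h x * pd (Φ i j) h x) * pd (Φ k l) m x) := by
            refine integral_congr_fun fun x => ?_
            exact quadSym (fun p q n h => c p q n h x) (fun a b c0 => e a b c0 x)
              (fun m h => ϵ m h x) (fun p q n h => csym2 p q n h x)
              (fun m h => hϵsym m h x) (fun n h => pd (P k l n) h x)
              (fun n h => pd (P i j n) h x) (fun h => pd (Φ k l) h x)
              (fun h => pd (Φ i j) h x)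
        _ = ∫ x in s, ((∑ n, ∑ h, c k l n h x * pd (P i j n) h x)
            + ∑ h, e h k l x * pd (Φ i j) h x) := (KEY1 i j k l).symm
  · -- e^H symmetry
    intro k i j
    have mU' : ∀ n h, Measurable (fun x => pd (P i j n) h x - pd (P j i n) h x) :=
      fun n h => (mP i j n h).sub (mP j i n h)
    have ma' : ∀ h, Measurable (fun x => pd (Φ i j) h x - pd (Φ j i) h x) :=
      fun h => (mF i j h).sub (mF j i h)
    have iU' : ∀ n h, IntegrableOn (fun x => (pd (P i j n) h x - pd (P j i n) h x) ^ 2) s := by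
      intro n h
      have hrw : (fun x => (pd (P i j n) h x - pd (P j i n) h x) ^ 2)
          = fun x => ((1:ℝ) * pd (P i j n) h x + (-1) * pd (P j i n) h x) ^ 2 := by
        funext x; ring
      rw [hrw]
      exact sqint_comb (mP i j n h) (mP j i n h) (iP i j n h) (iP j i n h) 1 (-1)
    have ia' : ∀ h, IntegrableOn (fun x => (pd (Φ i j) h x - pd (Φ j i) h x) ^ 2) s := by
      intro h
      have hrw : (fun x => (pd (Φ i j) h x - pd (Φ j i) h x) ^ 2)
          = fun x => ((1:ℝ) * pd (Φ i j) h x + (-1) * pd (Φ j i) h x) ^ 2 := by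
        funext x; ring
      rw [hrw]
      exact sqint_comb (mF i j h) (mF j i h) (iF i j h) (iF j i h) 1 (-1)
    have hH1d : ∀ p, ∫ x in s, ∑ q, ((∑ n, ∑ h, c p q n h x * (pd (P i j n) h x - pd (P j i n) h x)) + ∑ h, e h p q x * (pd (Φ i j) h x - pd (Φ j i) h x)) * ((pd (P i j p) q x - pd (P j i p) q x) - ((if p = i then (if j = q then 1 else 0) else (0:ℝ)) - (if p = j then (if i = q then 1 else 0) else 0))) = 0 := by
      intro p
      have hg : H10 s (fun x => (P i j p x - if p = i then x j else 0)
          - (P j i p x - if p = j then x i else 0)) :=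
        H10_sub (hPbc i j p) (hPbc j i p)
      have h01 := hP1 i j p _ hg
      have h02 := hP1 j i p _ hg
      have hgq : ∀ q x, pd (fun y => (P i j p y - if p = i then y j else 0)
            - (P j i p y - if p = j then y i else 0)) q x = ((pd (P i j p) q x - pd (P j i p) q x) - ((if p = i then (if j = q then 1 else 0) else (0:ℝ)) - (if p = j then (if i = q then 1 else 0) else 0))) := by
        intro q x
        rw [pd_sub (hPbc i j p).1 (hPbc j i p).1 q x,
          pd_sub (hPreg i j p) (differentiable_coord_if _ _) q x,
          pd_sub (hPreg j i p) (differentiable_coord_if _ _) q x,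
          pd_coord_if, pd_coord_if]
        ring
      simp only [hgq] at h01 h02
      have iT : ∀ q : Fin 3, IntegrableOn (fun x => ((pd (P i j p) q x - pd (P j i p) q x) - ((if p = i then (if j = q then 1 else 0) else (0:ℝ)) - (if p = j then (if i = q then 1 else 0) else 0))) ^ 2) s := by
        intro q
        have hrw : (fun x => ((pd (P i j p) q x - pd (P j i p) q x) - ((if p = i then (if j = q then 1 else 0) else (0:ℝ)) - (if p = j then (if i = q then 1 else 0) else 0))) ^ 2)
            = fun x => ((1:ℝ) * (pd (P i j p) q x - pd (P j i p) q x)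
              + (-((if p = i then (if j = q then 1 else 0) else (0:ℝ)) - (if p = j then (if i = q then 1 else 0) else 0))) * (fun _ : Fin 3 → ℝ => (1:ℝ)) x) ^ 2 := by
          funext x; simp only []; ring
        rw [hrw]
        exact sqint_comb (mU' p q) measurable_const (iU' p q)
          (by simpa using hvol.lt_top) 1 _
      have mT : ∀ q : Fin 3, Measurable (fun x => ((pd (P i j p) q x - pd (P j i p) q x) - ((if p = i then (if j = q then 1 else 0) else (0:ℝ)) - (if p = j then (if i = q then 1 else 0) else 0)))) :=
        fun q => (mU' p q).sub_const _
      have I1 : IntegrableOn (fun x => ∑ q, ((∑ n, ∑ h, c p q n h x * pd (P i j n) h x) + ∑ h, e h p q x * pd (Φ i j) h x) * ((pd (P i j p) q x - pd (P j i p) q x) - ((if p = i then (if j = q then 1 else 0) else (0:ℝ)) - (if p = j then (if i = q then 1 else 0) else 0)))) s :=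
        integrable_finset_sum _ fun q _ =>
          intR1 hc he (mP i j) (mF i j) (mT q) (iP i j) (iF i j) (iT q) p q
      have I2 : IntegrableOn (fun x => ∑ q, ((∑ n, ∑ h, c p q n h x * pd (P j i n) h x) + ∑ h, e h p q x * pd (Φ j i) h x) * ((pd (P i j p) q x - pd (P j i p) q x) - ((if p = i then (if j = q then 1 else 0) else (0:ℝ)) - (if p = j then (if i = q then 1 else 0) else 0)))) s :=
        integrable_finset_sum _ fun q _ =>
          intR1 hc he (mP j i) (mF j i) (mT q) (iP j i) (iF j i) (iT q) p q
      have hsplit : ∀ x : Fin 3 → ℝ, (∑ q, ((∑ n, ∑ h, c p q n h x * (pd (P i j n) h x - pd (P j i n) h x)) + ∑ h, e h p q x * (pd (Φ i j) h x - pd (Φ j i) h x)) * ((pd (P i j p) q x - pd (P j i p) q x) - ((if p = i then (if j = q then 1 else 0) else (0:ℝ)) - (if p = j then (if i = q then 1 else 0) else 0))))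
          = (∑ q, ((∑ n, ∑ h, c p q n h x * pd (P i j n) h x) + ∑ h, e h p q x * pd (Φ i j) h x) * ((pd (P i j p) q x - pd (P j i p) q x) - ((if p = i then (if j = q then 1 else 0) else (0:ℝ)) - (if p = j then (if i = q then 1 else 0) else 0)))) - ∑ q, ((∑ n, ∑ h, c p q n h x * pd (P j i n) h x) + ∑ h, e h p q x * pd (Φ j i) h x) * ((pd (P i j p) q x - pd (P j i p) q x) - ((if p = i then (if j = q then 1 else 0) else (0:ℝ)) - (if p = j then (if i = q then 1 else 0) else 0))) := by
        intro x
        simp only [Fin.sum_univ_three]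
        ring
      rw [integral_congr_fun hsplit, integral_sub I1 I2, h01, h02]
      simp
    have C1 := W1 hvol c e hc he (fun n h x => pd (P i j n) h x - pd (P j i n) h x)
      (fun h x => pd (Φ i j) h x - pd (Φ j i) h x)
      (fun p q x => pd (P i j p) q x - pd (P j i p) q x)
      (fun p q => ((if p = i then (if j = q then 1 else 0) else (0:ℝ)) - (if p = j then (if i = q then 1 else 0) else 0)))
      mU' ma' mU' iU' ia' iU' hH1d
    have hKzero : ∀ x : Fin 3 → ℝ, (∑ p, ∑ q, ((∑ n, ∑ h, c p q n h x * (pd (P i j n) h x - pd (P j i n) h x)) + ∑ h, e h p q x * (pd (Φ i j) h x - pd (Φ j i) h x)) * ((if p = i then (if j = q then 1 else 0) else (0:ℝ)) - (if p = j then (if i = q then 1 else 0) else 0))) = 0 := by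
      intro x
      have hsp : (∑ p, ∑ q, ((∑ n, ∑ h, c p q n h x * (pd (P i j n) h x - pd (P j i n) h x)) + ∑ h, e h p q x * (pd (Φ i j) h x - pd (Φ j i) h x)) * ((if p = i then (if j = q then 1 else 0) else (0:ℝ)) - (if p = j then (if i = q then 1 else 0) else 0)))
          = (∑ p, ∑ q, ((∑ n, ∑ h, c p q n h x * (pd (P i j n) h x - pd (P j i n) h x)) + ∑ h, e h p q x * (pd (Φ i j) h x - pd (Φ j i) h x)) * (if p = i then (if j = q then 1 else 0) else 0))
            - ∑ p, ∑ q, ((∑ n, ∑ h, c p q n h x * (pd (P i j n) h x - pd (P j i n) h x)) + ∑ h, e h p q x * (pd (Φ i j) h x - pd (Φ j i) h x)) * (if p = j then (if i = q then 1 else 0) else 0) := by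
        simp only [mul_sub, Finset.sum_sub_distrib]
      rw [hsp,
        sum_deltaKron (fun p q => ((∑ n, ∑ h, c p q n h x * (pd (P i j n) h x - pd (P j i n) h x)) + ∑ h, e h p q x * (pd (Φ i j) h x - pd (Φ j i) h x))) i j,
        sum_deltaKron (fun p q => ((∑ n, ∑ h, c p q n h x * (pd (P i j n) h x - pd (P j i n) h x)) + ∑ h, e h p q x * (pd (Φ i j) h x - pd (Φ j i) h x))) j i, sub_eq_zero]
      congr 1
      · exact Finset.sum_congr rfl fun n _ => Finset.sum_congr rfl fun h _ => by
          rw [csym1 i j n h x]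
      · exact Finset.sum_congr rfl fun h _ => by rw [hesym h i j x]
    have C1' : (∫ x in s, ∑ p, ∑ q, ((∑ n, ∑ h, c p q n h x * (pd (P i j n) h x - pd (P j i n) h x)) + ∑ h, e h p q x * (pd (Φ i j) h x - pd (Φ j i) h x)) * (pd (P i j p) q x - pd (P j i p) q x)) = 0 := by
      rw [C1, integral_congr_fun hKzero, integral_zero]
    have hH2d : ∫ x in s, ∑ m, ((∑ n, ∑ h, e m n h x * (pd (P i j n) h x - pd (P j i n) h x)) - ∑ h, ϵ m h x * (pd (Φ i j) h x - pd (Φ j i) h x)) * ((pd (Φ i j) m x - pd (Φ j i) m x) - 0) = 0 := by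
      have hg : H10 s (fun x => Φ i j x - Φ j i x) := H10_sub (hΦbc i j) (hΦbc j i)
      have h01 := hP2 i j _ hg
      have h02 := hP2 j i _ hg
      have hgm : ∀ m x, pd (fun y => Φ i j y - Φ j i y) m x
          = pd (Φ i j) m x - pd (Φ j i) m x :=
        fun m x => pd_sub (hΦbc i j).1 (hΦbc j i).1 m x
      simp only [hgm] at h01 h02
      have I1 : IntegrableOn (fun x => ∑ m, ((∑ n, ∑ h, e m n h x * pd (P i j n) h x) - ∑ h, ϵ m h x * pd (Φ i j) h x) * (pd (Φ i j) m x - pd (Φ j i) m x)) s :=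
        integrable_finset_sum _ fun m _ =>
          intR2 he hϵ (mP i j) (mF i j) (ma' m) (iP i j) (iF i j) (ia' m) m
      have I2 : IntegrableOn (fun x => ∑ m, ((∑ n, ∑ h, e m n h x * pd (P j i n) h x) - ∑ h, ϵ m h x * pd (Φ j i) h x) * (pd (Φ i j) m x - pd (Φ j i) m x)) s :=
        integrable_finset_sum _ fun m _ =>
          intR2 he hϵ (mP j i) (mF j i) (ma' m) (iP j i) (iF j i) (ia' m) m
      have hsplit : ∀ x : Fin 3 → ℝ, (∑ m, ((∑ n, ∑ h, e m n h x * (pd (P i j n) h x - pd (P j i n) h x)) - ∑ h, ϵ m h x * (pd (Φ i j) h x - pd (Φ j i) h x)) * ((pd (Φ i j) m x - pd (Φ j i) m x) - 0))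
          = (∑ m, ((∑ n, ∑ h, e m n h x * pd (P i j n) h x) - ∑ h, ϵ m h x * pd (Φ i j) h x) * (pd (Φ i j) m x - pd (Φ j i) m x))
            - ∑ m, ((∑ n, ∑ h, e m n h x * pd (P j i n) h x) - ∑ h, ϵ m h x * pd (Φ j i) h x) * (pd (Φ i j) m x - pd (Φ j i) m x) := by
        intro x
        simp only [Fin.sum_univ_three]
        ring
      rw [integral_congr_fun hsplit, integral_sub I1 I2, h01, h02]
      simp
    have C2 := W2 hvol e ϵ he hϵ (fun n h x => pd (P i j n) h x - pd (P j i n) h x)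
      (fun h x => pd (Φ i j) h x - pd (Φ j i) h x)
      (fun m x => pd (Φ i j) m x - pd (Φ j i) m x) (fun _ => 0)
      mU' ma' ma' iU' ia' ia' hH2d
    have C2' : (∫ x in s, ∑ m, ((∑ n, ∑ h, e m n h x * (pd (P i j n) h x - pd (P j i n) h x)) - ∑ h, ϵ m h x * (pd (Φ i j) h x - pd (Φ j i) h x)) * (pd (Φ i j) m x - pd (Φ j i) m x)) = 0 := by
      rw [C2]
      have hz : ∀ x : Fin 3 → ℝ, (∑ m, ((∑ n, ∑ h, e m n h x * (pd (P i j n) h x - pd (P j i n) h x)) - ∑ h, ϵ m h x * (pd (Φ i j) h x - pd (Φ j i) h x)) * (0:ℝ)) = 0 := by intro x; simp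
      rw [integral_congr_fun hz, integral_zero]
    have iRda : IntegrableOn (fun x => ∑ p, ∑ q, ((∑ n, ∑ h, c p q n h x * (pd (P i j n) h x - pd (P j i n) h x)) + ∑ h, e h p q x * (pd (Φ i j) h x - pd (Φ j i) h x)) * (pd (P i j p) q x - pd (P j i p) q x)) s :=
      integrable_finset_sum _ fun p _ => integrable_finset_sum _ fun q _ =>
        intR1 hc he mU' ma' (mU' p q) iU' ia' (iU' p q) p q
    have iDda : IntegrableOn (fun x => ∑ m, ((∑ n, ∑ h, e m n h x * (pd (P i j n) h x - pd (P j i n) h x)) - ∑ h, ϵ m h x * (pd (Φ i j) h x - pd (Φ j i) h x)) * (pd (Φ i j) m x - pd (Φ j i) m x)) s :=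
      integrable_finset_sum _ fun m _ =>
        intR2 he hϵ mU' ma' (ma' m) iU' ia' (ia' m) m
    have icQ : IntegrableOn (fun x => ∑ p, ∑ q, (∑ n, ∑ h, c p q n h x * (pd (P i j n) h x - pd (P j i n) h x)) * (pd (P i j p) q x - pd (P j i p) q x)) s := by
      refine integrable_finset_sum _ fun p _ => integrable_finset_sum _ fun q _ => ?_
      have hrw : (fun x => (∑ n, ∑ h, c p q n h x * (pd (P i j n) h x - pd (P j i n) h x)) * (pd (P i j p) q x - pd (P j i p) q x))
          = fun x => ∑ n, ∑ h, c p q n h x * (pd (P i j n) h x - pd (P j i n) h x) * (pd (P i j p) q x - pd (P j i p) q x) := by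
        funext x; simp only [Finset.sum_mul]
      rw [hrw]
      refine integrable_finset_sum _ fun n _ => integrable_finset_sum _ fun h _ => ?_
      obtain ⟨mc0, M, hM⟩ := hc p q n h
      exact intOn_mul3 mc0 hM (mU' n h) (mU' p q) (iU' n h) (iU' p q)
    have ieQ : IntegrableOn (fun x => ∑ m, (∑ h, ϵ m h x * (pd (Φ i j) h x - pd (Φ j i) h x)) * (pd (Φ i j) m x - pd (Φ j i) m x)) s := by
      refine integrable_finset_sum _ fun m _ => ?_
      have hrw : (fun x => (∑ h, ϵ m h x * (pd (Φ i j) h x - pd (Φ j i) h x)) * (pd (Φ i j) m x - pd (Φ j i) m x))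
          = fun x => ∑ h, ϵ m h x * (pd (Φ i j) h x - pd (Φ j i) h x) * (pd (Φ i j) m x - pd (Φ j i) m x) := by
        funext x; simp only [Finset.sum_mul]
      rw [hrw]
      refine integrable_finset_sum _ fun h _ => ?_
      obtain ⟨me0, M, hM⟩ := hϵ m h
      exact intOn_mul3 me0 hM (ma' h) (ma' m) (ia' h) (ia' m)
    have iE : IntegrableOn (fun x => (∑ p, ∑ q, (∑ n, ∑ h, c p q n h x * (pd (P i j n) h x - pd (P j i n) h x)) * (pd (P i j p) q x - pd (P j i p) q x)) + ∑ m, (∑ h, ϵ m h x * (pd (Φ i j) h x - pd (Φ j i) h x)) * (pd (Φ i j) m x - pd (Φ j i) m x)) s := icQ.add ieQ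
    have hEzero : (∫ x in s, ((∑ p, ∑ q, (∑ n, ∑ h, c p q n h x * (pd (P i j n) h x - pd (P j i n) h x)) * (pd (P i j p) q x - pd (P j i p) q x)) + ∑ m, (∑ h, ϵ m h x * (pd (Φ i j) h x - pd (Φ j i) h x)) * (pd (Φ i j) m x - pd (Φ j i) m x))) = 0 := by
      have hptw : ∀ x : Fin 3 → ℝ, ((∑ p, ∑ q, (∑ n, ∑ h, c p q n h x * (pd (P i j n) h x - pd (P j i n) h x)) * (pd (P i j p) q x - pd (P j i p) q x)) + ∑ m, (∑ h, ϵ m h x * (pd (Φ i j) h x - pd (Φ j i) h x)) * (pd (Φ i j) m x - pd (Φ j i) m x))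
          = (∑ p, ∑ q, ((∑ n, ∑ h, c p q n h x * (pd (P i j n) h x - pd (P j i n) h x)) + ∑ h, e h p q x * (pd (Φ i j) h x - pd (Φ j i) h x)) * (pd (P i j p) q x - pd (P j i p) q x)) - ∑ m, ((∑ n, ∑ h, e m n h x * (pd (P i j n) h x - pd (P j i n) h x)) - ∑ h, ϵ m h x * (pd (Φ i j) h x - pd (Φ j i) h x)) * (pd (Φ i j) m x - pd (Φ j i) m x) := by
        intro x
        simp only [Fin.sum_univ_three]
        ring
      rw [integral_congr_fun hptw, integral_sub iRda iDda, C1', C2', sub_zero]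
    have iX : ∀ n h, IntegrableOn (fun x => ((pd (P i j n) h x - pd (P j i n) h x + (pd (P i j h) n x - pd (P j i h) n x)) / 2) ^ 2) s := by
      intro n h
      have hrw : (fun x => ((pd (P i j n) h x - pd (P j i n) h x + (pd (P i j h) n x - pd (P j i h) n x)) / 2) ^ 2)
          = fun x => ((1/2 : ℝ) * (pd (P i j n) h x - pd (P j i n) h x)
            + (1/2) * (pd (P i j h) n x - pd (P j i h) n x)) ^ 2 := by
        funext x; ring
      rw [hrw]
      exact sqint_comb (mU' n h) (mU' h n) (iU' n h) (iU' h n) (1/2) (1/2)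
    have iN : IntegrableOn (fun x => α * (∑ n, ∑ h, ((pd (P i j n) h x - pd (P j i n) h x + (pd (P i j h) n x - pd (P j i h) n x)) / 2) ^ 2) + β * ∑ h, (pd (Φ i j) h x - pd (Φ j i) h x) ^ 2) s :=
      ((integrable_finset_sum _ fun n _ => integrable_finset_sum (μ := volume.restrict s) _
        fun h _ => iX n h).const_mul α).add
        ((integrable_finset_sum _ fun h _ => ia' h).const_mul β)
    have hNnn : ∀ x : Fin 3 → ℝ, 0 ≤ α * (∑ n, ∑ h, ((pd (P i j n) h x - pd (P j i n) h x + (pd (P i j h) n x - pd (P j i h) n x)) / 2) ^ 2) + β * ∑ h, (pd (Φ i j) h x - pd (Φ j i) h x) ^ 2 := fun x =>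
      add_nonneg (mul_nonneg hα.le (Finset.sum_nonneg fun _ _ =>
          Finset.sum_nonneg fun _ _ => sq_nonneg _))
        (mul_nonneg hβ.le (Finset.sum_nonneg fun _ _ => sq_nonneg _))
    have hlow : ∀ x : Fin 3 → ℝ, (α * (∑ n, ∑ h, ((pd (P i j n) h x - pd (P j i n) h x + (pd (P i j h) n x - pd (P j i h) n x)) / 2) ^ 2) + β * ∑ h, (pd (Φ i j) h x - pd (Φ j i) h x) ^ 2) ≤ (∑ p, ∑ q, (∑ n, ∑ h, c p q n h x * (pd (P i j n) h x - pd (P j i n) h x)) * (pd (P i j p) q x - pd (P j i p) q x)) + ∑ m, (∑ h, ϵ m h x * (pd (Φ i j) h x - pd (Φ j i) h x)) * (pd (Φ i j) m x - pd (Φ j i) m x) := by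
      intro x
      have h1 := hell x (fun n h => ((pd (P i j n) h x - pd (P j i n) h x + (pd (P i j h) n x - pd (P j i h) n x)) / 2)) (fun n h => by ring)
      have h2 := hϵel x (fun h => (pd (Φ i j) h x - pd (Φ j i) h x))
      have e1 : (∑ p, ∑ q, (∑ n, ∑ h, c p q n h x * (pd (P i j n) h x - pd (P j i n) h x)) * (pd (P i j p) q x - pd (P j i p) q x)) = ∑ p, ∑ q, (∑ n, ∑ h, c p q n h x * ((pd (P i j n) h x - pd (P j i n) h x + (pd (P i j h) n x - pd (P j i h) n x)) / 2)) * (pd (P i j p) q x - pd (P j i p) q x) :=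
        Finset.sum_congr rfl fun p _ => Finset.sum_congr rfl fun q _ => by
          rw [symPair (fun n h => c p q n h x) (fun n h => csym3 p q n h x)
            (fun n h => pd (P i j n) h x - pd (P j i n) h x)]
      have e2 : (∑ p, ∑ q, (∑ n, ∑ h, c p q n h x * ((pd (P i j n) h x - pd (P j i n) h x + (pd (P i j h) n x - pd (P j i h) n x)) / 2)) * (pd (P i j p) q x - pd (P j i p) q x))
          = ∑ p, ∑ q, (∑ n, ∑ h, c p q n h x * ((pd (P i j n) h x - pd (P j i n) h x + (pd (P i j h) n x - pd (P j i h) n x)) / 2)) * ((pd (P i j p) q x - pd (P j i p) q x + (pd (P i j q) p x - pd (P j i q) p x)) / 2) :=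
        symPair (fun p q => ∑ n, ∑ h, c p q n h x * ((pd (P i j n) h x - pd (P j i n) h x + (pd (P i j h) n x - pd (P j i h) n x)) / 2))
          (fun p q => Finset.sum_congr rfl fun n _ => Finset.sum_congr rfl fun h0 _ => by
            rw [csym1 p q n h0 x])
          (fun p q => pd (P i j p) q x - pd (P j i p) q x)
      have e3 : (∑ p, ∑ q, (∑ n, ∑ h, c p q n h x * ((pd (P i j n) h x - pd (P j i n) h x + (pd (P i j h) n x - pd (P j i h) n x)) / 2)) * ((pd (P i j p) q x - pd (P j i p) q x + (pd (P i j q) p x - pd (P j i q) p x)) / 2))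
          = ∑ i', ∑ j', ∑ k', ∑ l', c i' j' k' l' x
            * ((pd (P i j i') j' x - pd (P j i i') j' x + (pd (P i j j') i' x - pd (P j i j') i' x)) / 2) * ((pd (P i j k') l' x - pd (P j i k') l' x + (pd (P i j l') k' x - pd (P j i l') k' x)) / 2) :=
        flatQuad (fun p q n h => c p q n h x)
          (fun n h => ((pd (P i j n) h x - pd (P j i n) h x + (pd (P i j h) n x - pd (P j i h) n x)) / 2))
      have e4 : (∑ m, (∑ h, ϵ m h x * (pd (Φ i j) h x - pd (Φ j i) h x)) * (pd (Φ i j) m x - pd (Φ j i) m x)) = ∑ i', ∑ j', ϵ i' j' x * (pd (Φ i j) i' x - pd (Φ j i) i' x) * (pd (Φ i j) j' x - pd (Φ j i) j' x) :=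
        flatQuad2 (fun m h => ϵ m h x) (fun h => (pd (Φ i j) h x - pd (Φ j i) h x))
      rw [e1, e2, e3, e4]
      exact add_le_add h1 h2
    have hN0 : (∫ x in s, (α * (∑ n, ∑ h, ((pd (P i j n) h x - pd (P j i n) h x + (pd (P i j h) n x - pd (P j i h) n x)) / 2) ^ 2) + β * ∑ h, (pd (Φ i j) h x - pd (Φ j i) h x) ^ 2)) = 0 :=
      le_antisymm (by rw [← hEzero]; exact setIntegral_mono_on iN iE hsm fun x _ => hlow x)
        (setIntegral_nonneg hsm fun x _ => hNnn x)
    have hNae : (fun x => α * (∑ n, ∑ h, ((pd (P i j n) h x - pd (P j i n) h x + (pd (P i j h) n x - pd (P j i h) n x)) / 2) ^ 2) + β * ∑ h, (pd (Φ i j) h x - pd (Φ j i) h x) ^ 2) =ᵐ[volume.restrict s] 0 :=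
      (integral_eq_zero_iff_of_nonneg (fun x => hNnn x) iN).mp hN0
    have hDae : (fun x => (∑ n, ∑ h, e k n h x * (pd (P i j n) h x - pd (P j i n) h x)) - ∑ h, ϵ k h x * (pd (Φ i j) h x - pd (Φ j i) h x)) =ᵐ[volume.restrict s] 0 := by
      filter_upwards [hNae] with x hx
      simp only [Pi.zero_apply] at hx ⊢
      have t1 : (0:ℝ) ≤ ∑ n, ∑ h, ((pd (P i j n) h x - pd (P j i n) h x + (pd (P i j h) n x - pd (P j i h) n x)) / 2) ^ 2 :=
        Finset.sum_nonneg fun _ _ => Finset.sum_nonneg fun _ _ => sq_nonneg _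
      have t2 : (0:ℝ) ≤ ∑ h, (pd (Φ i j) h x - pd (Φ j i) h x) ^ 2 :=
        Finset.sum_nonneg fun _ _ => sq_nonneg _
      have hs1 : (∑ n, ∑ h, ((pd (P i j n) h x - pd (P j i n) h x + (pd (P i j h) n x - pd (P j i h) n x)) / 2) ^ 2) = 0 :=
        le_antisymm (by nlinarith [mul_nonneg hβ.le t2]) t1
      have hs2 : (∑ h, (pd (Φ i j) h x - pd (Φ j i) h x) ^ 2) = 0 :=
        le_antisymm (by nlinarith [mul_nonneg hα.le t1]) t2
      have hX0 := sum2_sq_eq_zero hs1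
      have ha0 := sum1_sq_eq_zero hs2
      have he1 : (∑ n, ∑ h, e k n h x * (pd (P i j n) h x - pd (P j i n) h x))
          = ∑ n, ∑ h, e k n h x * ((pd (P i j n) h x - pd (P j i n) h x + (pd (P i j h) n x - pd (P j i h) n x)) / 2) :=
        symPair (fun n h => e k n h x) (fun n h => hesym k n h x)
          (fun n h => pd (P i j n) h x - pd (P j i n) h x)
      rw [he1,
        Finset.sum_eq_zero fun n hn => Finset.sum_eq_zero fun h hh => by
          rw [hX0 n h, mul_zero],
        Finset.sum_eq_zero fun h hh => by rw [ha0 h, mul_zero], sub_zero]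
    have hDint : (∫ x in s, ((∑ n, ∑ h, e k n h x * (pd (P i j n) h x - pd (P j i n) h x)) - ∑ h, ϵ k h x * (pd (Φ i j) h x - pd (Φ j i) h x))) = 0 := by
      rw [integral_congr_ae hDae]
      simp
    have iD1 : IntegrableOn (fun x => (∑ n, ∑ h, e k n h x * pd (P i j n) h x)
        - ∑ h, ϵ k h x * pd (Φ i j) h x) s := by
      apply Integrable.sub
      · refine integrable_finset_sum _ fun n _ => integrable_finset_sum _ fun h _ => ?_
        obtain ⟨me0, M, hM⟩ := he k n h
        exact intOn_mul2 hvol me0 hM (mP i j n h) (iP i j n h)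
      · refine integrable_finset_sum _ fun h _ => ?_
        obtain ⟨me0, M, hM⟩ := hϵ k h
        exact intOn_mul2 hvol me0 hM (mF i j h) (iF i j h)
    have iD2 : IntegrableOn (fun x => (∑ n, ∑ h, e k n h x * pd (P j i n) h x)
        - ∑ h, ϵ k h x * pd (Φ j i) h x) s := by
      apply Integrable.sub
      · refine integrable_finset_sum _ fun n _ => integrable_finset_sum _ fun h _ => ?_
        obtain ⟨me0, M, hM⟩ := he k n h
        exact intOn_mul2 hvol me0 hM (mP j i n h) (iP j i n h)
      · refine integrable_finset_sum _ fun h _ => ?_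
        obtain ⟨me0, M, hM⟩ := hϵ k h
        exact intOn_mul2 hvol me0 hM (mF j i h) (iF j i h)
    unfold eH
    rw [setAverage_eq, setAverage_eq]
    congr 1
    have hptw2 : ∀ x : Fin 3 → ℝ,
        ((∑ n, ∑ h, e k n h x * pd (P i j n) h x) - ∑ h, ϵ k h x * pd (Φ i j) h x)
          - ((∑ n, ∑ h, e k n h x * pd (P j i n) h x) - ∑ h, ϵ k h x * pd (Φ j i) h x)
        = ((∑ n, ∑ h, e k n h x * (pd (P i j n) h x - pd (P j i n) h x)) - ∑ h, ϵ k h x * (pd (Φ i j) h x - pd (Φ j i) h x)) := by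
      intro x
      simp only [Fin.sum_univ_three]
      ring
    rw [← sub_eq_zero, ← integral_sub iD1 iD2, integral_congr_fun hptw2]
    exact hDint
  · -- ϵ^H symmetry
    have KEY2 : ∀ l r : Fin 3,
        (∫ x in s, ((∑ n, ∑ h, e r n h x * pd (Q l n) h x)
          - ∑ h, ϵ r h x * pd (Ψ l) h x))
        = ∫ x in s, ((∑ p, ∑ q, ((∑ n, ∑ h, c p q n h x * pd (Q l n) h x)
            + ∑ h, e h p q x * pd (Ψ l) h x) * pd (Q r p) q x)
          + ∑ m, ((∑ n, ∑ h, e m n h x * pd (Q l n) h x)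
            - ∑ h, ϵ m h x * pd (Ψ l) h x) * pd (Ψ r) m x) := by
      intro l r
      have hH1 : ∀ p, ∫ x in s, ∑ q, ((∑ n, ∑ h, c p q n h x * pd (Q l n) h x)
          + ∑ h, e h p q x * pd (Ψ l) h x) * (pd (Q r p) q x - (0:ℝ)) = 0 := by
        intro p
        have h0 := hQ1 l p (Q r p) (hQbc r p)
        simp only [sub_zero]
        exact h0
      have A1 := W1 hvol c e hc he (fun n h x => pd (Q l n) h x)
        (fun h x => pd (Ψ l) h x) (fun p q x => pd (Q r p) q x)
        (fun _ _ => (0:ℝ))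
        (fun n h => mQ l n h) (fun h => mS l h) (fun p q => mQ r p q)
        (fun n h => iQ l n h) (fun h => iS l h) (fun p q => iQ r p q) hH1
      have A1' : (∫ x in s, ∑ p, ∑ q, ((∑ n, ∑ h, c p q n h x * pd (Q l n) h x)
          + ∑ h, e h p q x * pd (Ψ l) h x) * pd (Q r p) q x) = 0 := by
        rw [A1]
        have hz : ∀ x : Fin 3 → ℝ, (∑ p, ∑ q, ((∑ n, ∑ h, c p q n h x * pd (Q l n) h x)
            + ∑ h, e h p q x * pd (Ψ l) h x) * (0:ℝ)) = 0 := by intro x; simp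
        rw [integral_congr_fun hz, integral_zero]
      have hH2 : ∫ x in s, ∑ m, ((∑ n, ∑ h, e m n h x * pd (Q l n) h x)
          - ∑ h, ϵ m h x * pd (Ψ l) h x) * (pd (Ψ r) m x
            - (if r = m then 1 else 0)) = 0 := by
        have h0 := hQ2 l (fun x => Ψ r x - x r) (hΨbc r)
        have hgm : ∀ m x, pd (fun y => Ψ r y - y r) m x
            = pd (Ψ r) m x - (if r = m then 1 else 0) := by
          intro m x
          rw [pd_sub (hΨreg r) (differentiable_coord r) m x, pd_coord]
        simp only [hgm] at h0
        exact h0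
      have A2 := W2 hvol e ϵ he hϵ (fun n h x => pd (Q l n) h x)
        (fun h x => pd (Ψ l) h x) (fun m x => pd (Ψ r) m x)
        (fun m => if r = m then 1 else 0)
        (fun n h => mQ l n h) (fun h => mS l h) (fun m => mS r m)
        (fun n h => iQ l n h) (fun h => iS l h) (fun m => iS r m) hH2
      have hKval : ∀ x : Fin 3 → ℝ, (∑ m, ((∑ n, ∑ h, e m n h x * pd (Q l n) h x)
            - ∑ h, ϵ m h x * pd (Ψ l) h x) * (if r = m then 1 else 0))
          = (∑ n, ∑ h, e r n h x * pd (Q l n) h x) - ∑ h, ϵ r h x * pd (Ψ l) h x :=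
        fun x => sum_delta1 (fun m => (∑ n, ∑ h, e m n h x * pd (Q l n) h x)
            - ∑ h, ϵ m h x * pd (Ψ l) h x) r
      have iRV : IntegrableOn (fun x => ∑ p, ∑ q,
          ((∑ n, ∑ h, c p q n h x * pd (Q l n) h x)
          + ∑ h, e h p q x * pd (Ψ l) h x) * pd (Q r p) q x) s :=
        integrable_finset_sum _ fun p _ => integrable_finset_sum _ fun q _ =>
          intR1 hc he (mQ l) (mS l) (mQ r p q) (iQ l) (iS l) (iQ r p q) p q
      have iDb : IntegrableOn (fun x => ∑ m, ((∑ n, ∑ h, e m n h x * pd (Q l n) h x)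
          - ∑ h, ϵ m h x * pd (Ψ l) h x) * pd (Ψ r) m x) s :=
        integrable_finset_sum _ fun m _ =>
          intR2 he hϵ (mQ l) (mS l) (mS r m) (iQ l) (iS l) (iS r m) m
      calc (∫ x in s, ((∑ n, ∑ h, e r n h x * pd (Q l n) h x)
            - ∑ h, ϵ r h x * pd (Ψ l) h x))
          = ∫ x in s, ∑ m, ((∑ n, ∑ h, e m n h x * pd (Q l n) h x)
            - ∑ h, ϵ m h x * pd (Ψ l) h x) * (if r = m then 1 else 0) :=
            (integral_congr_fun hKval).symm
        _ = ∫ x in s, ∑ m, ((∑ n, ∑ h, e m n h x * pd (Q l n) h x)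
            - ∑ h, ϵ m h x * pd (Ψ l) h x) * pd (Ψ r) m x := A2.symm
        _ = (∫ x in s, ∑ p, ∑ q, ((∑ n, ∑ h, c p q n h x * pd (Q l n) h x)
            + ∑ h, e h p q x * pd (Ψ l) h x) * pd (Q r p) q x)
            + ∫ x in s, ∑ m, ((∑ n, ∑ h, e m n h x * pd (Q l n) h x)
            - ∑ h, ϵ m h x * pd (Ψ l) h x) * pd (Ψ r) m x := by rw [A1']; ring
        _ = _ := (integral_add iRV iDb).symm
    intro i j
    unfold epsH
    rw [setAverage_eq, setAverage_eq]
    congr 2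
    calc (∫ x in s, ((∑ n, ∑ h, e i n h x * pd (Q j n) h x)
          - ∑ h, ϵ i h x * pd (Ψ j) h x))
        = _ := KEY2 j i
      _ = ∫ x in s, ((∑ p, ∑ q, ((∑ n, ∑ h, c p q n h x * pd (Q i n) h x)
            + ∑ h, e h p q x * pd (Ψ i) h x) * pd (Q j p) q x)
          + ∑ m, ((∑ n, ∑ h, e m n h x * pd (Q i n) h x)
            - ∑ h, ϵ m h x * pd (Ψ i) h x) * pd (Ψ j) m x) := by
          refine integral_congr_fun fun x => ?_
          exact quadSym (fun p q n h => c p q n h x) (fun a b c0 => e a b c0 x)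
            (fun m h => ϵ m h x) (fun p q n h => csym2 p q n h x)
            (fun m h => hϵsym m h x) (fun n h => pd (Q j n) h x)
            (fun n h => pd (Q i n) h x) (fun h => pd (Ψ j) h x)
            (fun h => pd (Ψ i) h x)
      _ = ∫ x in s, ((∑ n, ∑ h, e j n h x * pd (Q i n) h x)
          - ∑ h, ϵ j h x * pd (Ψ i) h x) := (KEY2 i j).symm
end
end
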